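/- arXiv:1808.05923 — 2 statements merged into one kernel-verified Lean document; each statement's English description precedes it below -/
import Mathlib

section
/- Let n ≥ 1, n1 ≥ 2, m ≥ 1, r ≥ 0, let d0 ∈ U(n; 2^m), d1 ∈ U(n1; 2^m) (i.e., m1 = m, m2 = 0), let d2 be a column-balanced n1×r matrix with entries in {1,2}, let D3 be the corresponding column augmented design, and let D3b be D3 with the appended blocking column. Then WD(D3b) ≥ C(r+1) + (n²/(n+n1)²)·(3/2)^{r+1}·WD(d0) + (1/(n+n1)²)·(5/4)^m·(23/18)^r·( (3/2)·T1' + 2·(5/4)·( p1·(6/5)^{w1} + q1·(6/5)^{w1+1} ) ). -/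
open Finset

noncomputable section

namespace CAUD

/-- The mapped point value `u = (2x+1)/(2q)`. -/
def uVal (q x : ℕ) : ℝ := (2 * (x : ℝ) + 1) / (2 * (q : ℝ))

/-- The squared wrap-around L2-discrepancy of an `N × M` design whose `k`-th
column takes values in `{0, …, q k - 1}`. -/
def WD {N M : ℕ} (q : Fin M → ℕ) (x : Fin N → Fin M → ℕ) : ℝ :=
  -((4 : ℝ) / 3) ^ M + (1 / (N : ℝ) ^ 2) *
    ∑ i : Fin N, ∑ j : Fin N, ∏ k : Fin M,
      ((3 : ℝ) / 2 - |uVal (q k) (x i k) - uVal (q k) (x j k)| *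
        (1 - |uVal (q k) (x i k) - uVal (q k) (x j k)|))

/-- A mixed-level U-type design in `U(N; 2^{m1} 3^{m2})`: the first `m1` columns are
two-level and balanced, the last `m2` columns are three-level and balanced. -/
def IsUType (N m1 m2 : ℕ) (d : Fin N → Fin (m1 + m2) → ℕ) : Prop :=
  ∀ k : Fin (m1 + m2),
    if (k : ℕ) < m1 then
      (∀ i, d i k < 2) ∧ ∀ v < 2, 2 * (univ.filter (fun i => d i k = v)).card = N
    else
      (∀ i, d i k < 3) ∧ ∀ v < 3, 3 * (univ.filter (fun i => d i k = v)).card = N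

/-- A column-balanced `n1 × r` matrix with entries in `{1, 2}`: every column has
exactly `n1/2` entries equal to 1 and `n1/2` entries equal to 2. -/
def IsBalanced (n1 r : ℕ) (d2 : Fin n1 → Fin r → ℕ) : Prop :=
  (∀ i k, d2 i k = 1 ∨ d2 i k = 2) ∧
  ∀ k, 2 * (univ.filter (fun i => d2 i k = 1)).card = n1 ∧
       2 * (univ.filter (fun i => d2 i k = 2)).card = n1

/-- The column augmented design: first `n` rows are `(d0, 0)`, last `n1` rows `(d1, d2)`. -/
def augDesign (n n1 m r : ℕ) (d0 : Fin n → Fin m → ℕ) (d1 : Fin n1 → Fin m → ℕ)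
    (d2 : Fin n1 → Fin r → ℕ) : Fin (n + n1) → Fin (m + r) → ℕ := fun i k =>
  if hi : (i : ℕ) < n then
    if hk : (k : ℕ) < m then d0 ⟨i, hi⟩ ⟨k, hk⟩ else 0
  else
    if hk : (k : ℕ) < m then d1 ⟨(i : ℕ) - n, by have := i.isLt; omega⟩ ⟨k, hk⟩
    else d2 ⟨(i : ℕ) - n, by have := i.isLt; omega⟩ ⟨(k : ℕ) - m, by have := k.isLt; omega⟩

/-- Append one blocking column: 0 on the initial rows, 1 on the follow-up rows. -/
def appendOne (n n1 M : ℕ) (D : Fin (n + n1) → Fin M → ℕ) :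
    Fin (n + n1) → Fin (M + 1) → ℕ := fun i k =>
  if hk : (k : ℕ) < M then D i ⟨k, hk⟩ else if (i : ℕ) < n then 0 else 1

/-- Append two blocking columns: the first is 0 on the initial rows and 1 on the
follow-up rows; the second is 0 on the initial rows and the first `n1/2` follow-up
rows, and 1 on the remaining follow-up rows. -/
def appendTwo (n n1 M : ℕ) (D : Fin (n + n1) → Fin M → ℕ) :
    Fin (n + n1) → Fin (M + 2) → ℕ := fun i k =>
  if hk : (k : ℕ) < M then D i ⟨k, hk⟩
  else if (k : ℕ) = M then (if (i : ℕ) < n then 0 else 1)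
  else (if (i : ℕ) < n + n1 / 2 then 0 else 1)

/-- Level sizes of the (possibly blocking-augmented) column augmented design:
first `m1` columns are two-level, the next `m2 + r` are three-level, anything
after that (blocking columns) is two-level. -/
def qfun (m1 m2 r k : ℕ) : ℕ :=
  if k < m1 then 2 else if k < m1 + m2 + r then 3 else 2

/-- Coincidence number among the first `m1` columns. -/
def Fco {N M : ℕ} (m1 : ℕ) (D : Fin N → Fin M → ℕ) (i j : Fin N) : ℕ :=
  (univ.filter (fun k : Fin M => (k : ℕ) < m1 ∧ D i k = D j k)).card

/-- Coincidence number among columns `m1, …, m1 + m2 - 1`. -/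
def Vco {N M : ℕ} (m1 m2 : ℕ) (D : Fin N → Fin M → ℕ) (i j : Fin N) : ℕ :=
  (univ.filter (fun k : Fin M => m1 ≤ (k : ℕ) ∧ (k : ℕ) < m1 + m2 ∧ D i k = D j k)).card

/-- Coincidence number among the columns `≥ m`, counting agreements with common
value in `{1, 2}`. -/
def Tco {N M : ℕ} (m : ℕ) (D : Fin N → Fin M → ℕ) (i j : Fin N) : ℕ :=
  (univ.filter (fun k : Fin M =>
    m ≤ (k : ℕ) ∧ D i k = D j k ∧ (D i k = 1 ∨ D i k = 2))).card

/-- Total coincidence number between two rows. -/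
def lam {N M : ℕ} (D : Fin N → Fin M → ℕ) (i j : Fin N) : ℕ :=
  (univ.filter (fun k : Fin M => D i k = D j k)).card

/-- Number of rows whose `k`-th entry is `u` and whose `l`-th entry is `v`. -/
def nuv {N M : ℕ} (d : Fin N → Fin M → ℕ) (k l : Fin M) (u v : ℕ) : ℕ :=
  (univ.filter (fun i : Fin N => d i k = u ∧ d i l = v)).card

/-- Non-orthogonality of a pair of columns. -/
def fNOD {N M : ℕ} (q : Fin M → ℕ) (d : Fin N → Fin M → ℕ) (k l : Fin M) : ℝ :=
  ∑ u ∈ Finset.range (q k), ∑ v ∈ Finset.range (q l),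
    ((nuv d k l u v : ℝ) - (N : ℝ) / ((q k : ℝ) * (q l : ℝ))) ^ 2

/-- The `E(f_NOD)` criterion: average non-orthogonality over all pairs of columns. -/
def EfNOD {N M : ℕ} (q : Fin M → ℕ) (d : Fin N → Fin M → ℕ) : ℝ :=
  (∑ k : Fin M, ∑ l : Fin M, if (k : ℕ) < (l : ℕ) then fNOD q d k l else 0) /
    (Nat.choose M 2 : ℝ)

/-- Stacking the stage designs `d 0, …, d (l-1)` on top of one another. -/
def stack (M : ℕ) (ns : ℕ → ℕ) (d : (j : ℕ) → Fin (ns j) → Fin M → ℕ) :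
    (l : ℕ) → Fin (∑ j ∈ Finset.range l, ns j) → Fin M → ℕ
  | 0 => fun _ _ => 0
  | l + 1 => fun i =>
    let i' : Fin ((∑ j ∈ Finset.range l, ns j) + ns l) :=
      Fin.cast (Finset.sum_range_succ ns l) i
    if h : (i' : ℕ) < ∑ j ∈ Finset.range l, ns j then
      stack M ns d l ⟨(i' : ℕ), h⟩
    else d l ⟨(i' : ℕ) - ∑ j ∈ Finset.range l, ns j, by have := i'.isLt; omega⟩

def aa : ℝ := Real.log (6 / 5)

def bb : ℝ := Real.log (27 / 23)

/-- The constant `C(s)`. -/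
def Cconst (n n1 m s : ℕ) : ℝ :=
  -(((4 : ℝ) / 3) ^ s - ((n : ℝ) ^ 2 / ((n : ℝ) + n1) ^ 2) * ((3 : ℝ) / 2) ^ s) * ((4 : ℝ) / 3) ^ m
  + ((n1 : ℝ) / ((n : ℝ) + n1) ^ 2) * ((3 : ℝ) / 2) ^ (m + s)

def phi1 (n1 m1 m2 r : ℕ) : ℝ :=
  aa * m1 * ((n1 : ℝ) - 2) / (2 * ((n1 : ℝ) - 1)) + bb * m2 * ((n1 : ℝ) - 3) / (3 * ((n1 : ℝ) - 1))
  + bb * r * ((n1 : ℝ) - 2) / (2 * ((n1 : ℝ) - 1))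

def phi2 (m1 m2 : ℕ) : ℝ := aa * m1 / 2 + bb * m2 / 3

def T1c (n1 m1 m2 r : ℕ) : ℝ := (n1 : ℝ) * ((n1 : ℝ) - 1) * Real.exp (phi1 n1 m1 m2 r)

def T2c (n n1 m1 m2 : ℕ) : ℝ := (n : ℝ) * (n1 : ℝ) * Real.exp (phi2 m1 m2)

/-- Lower bound `LBW3` (mixed-level case, Theorem 1). -/
def LBW3 (n n1 m1 m2 r : ℕ) (wd0 : ℝ) : ℝ :=
  Cconst n n1 (m1 + m2) r + ((n : ℝ) ^ 2 / ((n : ℝ) + n1) ^ 2) * ((3 : ℝ) / 2) ^ r * wd0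
  + (1 / ((n : ℝ) + n1) ^ 2) * ((5 : ℝ) / 4) ^ m1 * ((23 : ℝ) / 18) ^ (m2 + r) *
      (T1c n1 m1 m2 r + 2 * T2c n n1 m1 m2)

def phi1p (n1 m r : ℕ) : ℝ :=
  aa * m * ((n1 : ℝ) - 2) / (2 * ((n1 : ℝ) - 1)) + bb * r * ((n1 : ℝ) - 2) / (2 * ((n1 : ℝ) - 1))

def T1pc (n1 m r : ℕ) : ℝ := (n1 : ℝ) * ((n1 : ℝ) - 1) * Real.exp (phi1p n1 m r)

def w1 (m : ℕ) : ℕ := m / 2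

def q1c (n n1 m : ℕ) : ℝ := (m : ℝ) * n * n1 / 2 - (n : ℝ) * n1 * (w1 m : ℝ)

def p1c (n n1 m : ℕ) : ℝ := (n : ℝ) * n1 - q1c n n1 m

/-- Lower bound `LBW3` for a two-level initial design (Theorem 2). -/
def LBW32 (n n1 m r : ℕ) (wd0 : ℝ) : ℝ :=
  Cconst n n1 m r + ((n : ℝ) ^ 2 / ((n : ℝ) + n1) ^ 2) * ((3 : ℝ) / 2) ^ r * wd0
  + (1 / ((n : ℝ) + n1) ^ 2) * ((5 : ℝ) / 4) ^ m * ((23 : ℝ) / 18) ^ r *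
      (T1pc n1 m r + 2 * (p1c n n1 m * ((6 : ℝ) / 5) ^ w1 m + q1c n n1 m * ((6 : ℝ) / 5) ^ (w1 m + 1)))

def w2 (n1 m r : ℕ) : ℤ :=
  ⌊(m : ℝ) * ((n1 : ℝ) - 3) / (3 * ((n1 : ℝ) - 1)) + (r : ℝ) * ((n1 : ℝ) - 2) / (2 * ((n1 : ℝ) - 1))⌋

def q2c (n1 m r : ℕ) : ℝ :=
  (m : ℝ) * n1 * ((n1 : ℝ) - 3) / 3 + (r : ℝ) * n1 * ((n1 : ℝ) - 2) / 2
  - (n1 : ℝ) * ((n1 : ℝ) - 1) * (w2 n1 m r : ℝ)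

def p2c (n1 m r : ℕ) : ℝ := (n1 : ℝ) * ((n1 : ℝ) - 1) - q2c n1 m r

def w3 (m : ℕ) : ℕ := m / 3

def q3c (n n1 m : ℕ) : ℝ := (m : ℝ) * n * n1 / 3 - (n : ℝ) * n1 * (w3 m : ℝ)

def p3c (n n1 m : ℕ) : ℝ := (n : ℝ) * n1 - q3c n n1 m

/-- Lower bound `LBW3` for a three-level initial design (Theorem 3). -/
def LBW33 (n n1 m r : ℕ) (wd0 : ℝ) : ℝ :=
  Cconst n n1 m r + ((n : ℝ) ^ 2 / ((n : ℝ) + n1) ^ 2) * ((3 : ℝ) / 2) ^ r * wd0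
  + (1 / ((n : ℝ) + n1) ^ 2) * ((23 : ℝ) / 18) ^ (m + r) *
      (p2c n1 m r * ((27 : ℝ) / 23) ^ w2 n1 m r + q2c n1 m r * ((27 : ℝ) / 23) ^ (w2 n1 m r + 1)
       + 2 * (p3c n n1 m * ((27 : ℝ) / 23) ^ w3 m + q3c n n1 m * ((27 : ℝ) / 23) ^ (w3 m + 1)))

/-- Lower bound of Theorem 4 for a mixed-level initial design. -/
def LBW3b1 (n n1 m1 m2 r : ℕ) (wd0 : ℝ) : ℝ :=
  Cconst n n1 (m1 + m2) (r + 1) + ((n : ℝ) ^ 2 / ((n : ℝ) + n1) ^ 2) * ((3 : ℝ) / 2) ^ (r + 1) * wd0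
  + (1 / ((n : ℝ) + n1) ^ 2) * ((5 : ℝ) / 4) ^ m1 * ((23 : ℝ) / 18) ^ (m2 + r) *
      ((3 : ℝ) / 2 * T1c n1 m1 m2 r + 2 * ((5 : ℝ) / 4) * T2c n n1 m1 m2)

/-- Lower bound of Theorem 4 for a two-level initial design. -/
def LBW3b2 (n n1 m r : ℕ) (wd0 : ℝ) : ℝ :=
  Cconst n n1 m (r + 1) + ((n : ℝ) ^ 2 / ((n : ℝ) + n1) ^ 2) * ((3 : ℝ) / 2) ^ (r + 1) * wd0
  + (1 / ((n : ℝ) + n1) ^ 2) * ((5 : ℝ) / 4) ^ m * ((23 : ℝ) / 18) ^ r *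
      ((3 : ℝ) / 2 * T1pc n1 m r +
        2 * ((5 : ℝ) / 4) * (p1c n n1 m * ((6 : ℝ) / 5) ^ w1 m + q1c n n1 m * ((6 : ℝ) / 5) ^ (w1 m + 1)))

/-- Lower bound of Theorem 4 for a three-level initial design. -/
def LBW3b3 (n n1 m r : ℕ) (wd0 : ℝ) : ℝ :=
  Cconst n n1 m (r + 1) + ((n : ℝ) ^ 2 / ((n : ℝ) + n1) ^ 2) * ((3 : ℝ) / 2) ^ (r + 1) * wd0
  + (1 / ((n : ℝ) + n1) ^ 2) * ((23 : ℝ) / 18) ^ (m + r) *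
      ((3 : ℝ) / 2 * (p2c n1 m r * ((27 : ℝ) / 23) ^ w2 n1 m r
                      + q2c n1 m r * ((27 : ℝ) / 23) ^ (w2 n1 m r + 1))
       + 2 * ((5 : ℝ) / 4) * (p3c n n1 m * ((27 : ℝ) / 23) ^ w3 m
                              + q3c n n1 m * ((27 : ℝ) / 23) ^ (w3 m + 1)))

def phi1B (n1 m1 m2 r : ℕ) : ℝ :=
  aa * ((m1 : ℝ) + 1) * ((n1 : ℝ) - 2) / (2 * ((n1 : ℝ) - 1))
  + bb * m2 * ((n1 : ℝ) - 3) / (3 * ((n1 : ℝ) - 1))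
  + bb * r * ((n1 : ℝ) - 2) / (2 * ((n1 : ℝ) - 1))

def phi2B (m1 m2 : ℕ) : ℝ := aa * ((m1 : ℝ) + 1) / 2 + bb * m2 / 3

def T1Bc (n1 m1 m2 r : ℕ) : ℝ := (n1 : ℝ) * ((n1 : ℝ) - 1) * Real.exp (phi1B n1 m1 m2 r)

def T2Bc (n n1 m1 m2 : ℕ) : ℝ := (n : ℝ) * (n1 : ℝ) * Real.exp (phi2B m1 m2)

/-- Lower bound `LBW3B` (Theorem 5). -/
def LBW3B (n n1 m1 m2 r : ℕ) (wd0 : ℝ) : ℝ :=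
  Cconst n n1 (m1 + m2) (r + 2) + ((n : ℝ) ^ 2 / ((n : ℝ) + n1) ^ 2) * ((3 : ℝ) / 2) ^ (r + 2) * wd0
  + (1 / ((n : ℝ) + n1) ^ 2) * ((5 : ℝ) / 4) ^ (m1 + 1) * ((23 : ℝ) / 18) ^ (m2 + r) *
      ((3 : ℝ) / 2 * T1Bc n1 m1 m2 r + 2 * ((5 : ℝ) / 4) * T2Bc n n1 m1 m2)

def psi1 (n1 m1 m2 r : ℕ) : ℤ :=
  ⌊((m1 : ℝ) * ((n1 : ℝ) - 2) / 2 + (m2 : ℝ) * ((n1 : ℝ) - 3) / 3 + (r : ℝ) * ((n1 : ℝ) - 2) / 2) /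
      ((n1 : ℝ) - 1)⌋

def eta1 (n1 m1 m2 r : ℕ) : ℝ :=
  (m1 : ℝ) * n1 * ((n1 : ℝ) - 2) / 2 + (m2 : ℝ) * n1 * ((n1 : ℝ) - 3) / 3
  + (r : ℝ) * n1 * ((n1 : ℝ) - 2) / 2 - (n1 : ℝ) * ((n1 : ℝ) - 1) * (psi1 n1 m1 m2 r : ℝ)

def zeta1 (n1 m1 m2 r : ℕ) : ℝ := (n1 : ℝ) * ((n1 : ℝ) - 1) - eta1 n1 m1 m2 r

def psi2 (m1 m2 : ℕ) : ℤ := ⌊(m1 : ℝ) / 2 + (m2 : ℝ) / 3⌋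

def eta2 (n n1 m1 m2 : ℕ) : ℝ :=
  (m1 : ℝ) * n * n1 / 2 + (m2 : ℝ) * n * n1 / 3 - (n : ℝ) * n1 * (psi2 m1 m2 : ℝ)

def zeta2 (n n1 m1 m2 : ℕ) : ℝ := (n : ℝ) * n1 - eta2 n n1 m1 m2

def Q1c (n1 m1 m2 r : ℕ) : ℝ :=
  zeta1 n1 m1 m2 r * (psi1 n1 m1 m2 r : ℝ) ^ 2 + eta1 n1 m1 m2 r * ((psi1 n1 m1 m2 r : ℝ) + 1) ^ 2

def Q1pc (n1 m1 m2 r : ℕ) : ℝ :=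
  zeta1 n1 m1 m2 r * ((psi1 n1 m1 m2 r : ℝ) + 1) ^ 2 + eta1 n1 m1 m2 r * ((psi1 n1 m1 m2 r : ℝ) + 2) ^ 2

def Q2c (n n1 m1 m2 : ℕ) : ℝ :=
  zeta2 n n1 m1 m2 * (psi2 m1 m2 : ℝ) ^ 2 + eta2 n n1 m1 m2 * ((psi2 m1 m2 : ℝ) + 1) ^ 2

/-- Lower bound `LBf3` for `E(f_NOD)` of the column augmented design. -/
def LBf3 (n n1 m1 m2 r : ℕ) (ef0 : ℝ) : ℝ :=
  ((m1 : ℝ) + m2) * ((m1 : ℝ) + m2 - 1) / (((m1 : ℝ) + m2 + r) * ((m1 : ℝ) + m2 + r - 1)) * ef0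
  + 1 / (((m1 : ℝ) + m2 + r) * ((m1 : ℝ) + m2 + r - 1)) * (Q1c n1 m1 m2 r + 2 * Q2c n n1 m1 m2)
  + ((n : ℝ) + n1) * ((m1 : ℝ) + m2 + r) / ((m1 : ℝ) + m2 + r - 1)
  - 1 / (((m1 : ℝ) + m2 + r) * ((m1 : ℝ) + m2 + r - 1)) *
    ((n : ℝ) * ((m1 : ℝ) + m2) ^ 2
      - (n : ℝ) ^ 2 * (((m1 : ℝ) + (m1 : ℝ) ^ 2) / 4 + (2 * (m2 : ℝ) + (m2 : ℝ) ^ 2) / 9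
          + (m1 : ℝ) * m2 / 3)
      - (r : ℝ) * m1 * n * ((n : ℝ) - 2)
      - 2 * (r : ℝ) * m2 * n * ((n : ℝ) - 3) / 3
      - (n : ℝ) * ((n : ℝ) - 1) * (r : ℝ) ^ 2
      + (r : ℝ) * ((n : ℝ) ^ 2 + (n1 : ℝ) ^ 2 / 2)
      + ((m1 : ℝ) / 2 + (m2 : ℝ) / 3 + (m1 : ℝ) * ((m1 : ℝ) - 1) / 4
          + ((m2 : ℝ) + r) * ((m2 : ℝ) + r - 1) / 9 + (m1 : ℝ) * ((m2 : ℝ) + r) / 3)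
        * ((n : ℝ) + n1) ^ 2)

/-- Lower bound `LBf3b` for `E(f_NOD)` of the design with one added blocking column. -/
def LBf3b (n n1 m1 m2 r : ℕ) (ef0 : ℝ) : ℝ :=
  ((m1 : ℝ) + m2) * ((m1 : ℝ) + m2 - 1) / (((m1 : ℝ) + m2 + r + 1) * ((m1 : ℝ) + m2 + r)) * ef0
  + 1 / (((m1 : ℝ) + m2 + r + 1) * ((m1 : ℝ) + m2 + r)) * (Q1pc n1 m1 m2 r + 2 * Q2c n n1 m1 m2)
  + ((n : ℝ) + n1) * ((m1 : ℝ) + m2 + r + 1) / ((m1 : ℝ) + m2 + r)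
  - 1 / (((m1 : ℝ) + m2 + r + 1) * ((m1 : ℝ) + m2 + r)) *
    ((n : ℝ) * ((m1 : ℝ) + m2) ^ 2
      - (n : ℝ) ^ 2 * (((m1 : ℝ) + (m1 : ℝ) ^ 2) / 4 + (2 * (m2 : ℝ) + (m2 : ℝ) ^ 2) / 9
          + (m1 : ℝ) * m2 / 3)
      - ((r : ℝ) + 1) * m1 * n * ((n : ℝ) - 2)
      - 2 * ((r : ℝ) + 1) * m2 * n * ((n : ℝ) - 3) / 3
      - (n : ℝ) * ((n : ℝ) - 1) * ((r : ℝ) + 1) ^ 2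
      + (r : ℝ) * ((n : ℝ) ^ 2 + (n1 : ℝ) ^ 2 / 2) + (n : ℝ) ^ 2 + (n1 : ℝ) ^ 2
      + ((m1 : ℝ) / 2 + (m2 : ℝ) / 3 + (m1 : ℝ) * ((m1 : ℝ) + 1) / 4
          + ((m2 : ℝ) + r) * ((m2 : ℝ) + r - 1) / 9 + ((m1 : ℝ) + 1) * ((m2 : ℝ) + r) / 3)
        * ((n : ℝ) + n1) ^ 2)

/-- Lower bound `LBf3B` for `E(f_NOD)` of the design with two added blocking columns. -/
def LBf3B (n n1 m1 m2 r : ℕ) (ef0 : ℝ) : ℝ :=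
  ((m1 : ℝ) + m2) * ((m1 : ℝ) + m2 - 1) / (((m1 : ℝ) + m2 + r + 2) * ((m1 : ℝ) + m2 + r + 1)) * ef0
  + 1 / (((m1 : ℝ) + m2 + r + 2) * ((m1 : ℝ) + m2 + r + 1)) *
      (Q1pc n1 (m1 + 1) m2 r + 2 * Q2c n n1 (m1 + 1) m2)
  + ((n : ℝ) + n1) * ((m1 : ℝ) + m2 + r + 2) / ((m1 : ℝ) + m2 + r + 1)
  - 1 / (((m1 : ℝ) + m2 + r + 2) * ((m1 : ℝ) + m2 + r + 1)) *
    ((n : ℝ) * ((m1 : ℝ) + m2) ^ 2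
      - (n : ℝ) ^ 2 * (((m1 : ℝ) + (m1 : ℝ) ^ 2) / 4 + (2 * (m2 : ℝ) + (m2 : ℝ) ^ 2) / 9
          + (m1 : ℝ) * m2 / 3)
      - ((r : ℝ) + 2) * m1 * n * ((n : ℝ) - 2)
      - 2 * ((r : ℝ) + 2) * m2 * n * ((n : ℝ) - 3) / 3
      - (n : ℝ) * ((n : ℝ) - 1) * ((r : ℝ) + 2) ^ 2
      + ((r : ℝ) + 2) * (n : ℝ) ^ 2 + (3 + (r : ℝ)) * (n1 : ℝ) ^ 2 / 2 + (n : ℝ) * n1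
      + ((m1 : ℝ) / 2 + (m2 : ℝ) / 3 + ((m1 : ℝ) + 2) * ((m1 : ℝ) + 1) / 4
          + ((m2 : ℝ) + r) * ((m2 : ℝ) + r - 1) / 9 + ((m1 : ℝ) + 2) * ((m2 : ℝ) + r) / 3)
        * ((n : ℝ) + n1) ^ 2)



-- ===== auxiliary lemmas =====

/-- The kernel of the wrap-around discrepancy. -/
def ker (q x y : ℕ) : ℝ :=
  (3 : ℝ) / 2 - |uVal q x - uVal q y| * (1 - |uVal q x - uVal q y|)

lemma ker_self (q x : ℕ) : ker q x x = 3/2 := by simp [ker]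

lemma ker_comm (q x y : ℕ) : ker q x y = ker q y x := by
  simp [ker, abs_sub_comm]

lemma ker2 {x y : ℕ} (hx : x < 2) (hy : y < 2) :
    ker 2 x y = if x = y then 3/2 else 5/4 := by
  interval_cases x <;> interval_cases y <;> norm_num [ker, uVal, abs_of_nonneg, abs_of_nonpos]

lemma ker3 {x y : ℕ} (hx : x < 3) (hy : y < 3) :
    ker 3 x y = if x = y then 3/2 else 23/18 := by
  interval_cases x <;> interval_cases y <;> norm_num [ker, uVal, abs_of_nonneg, abs_of_nonpos]

lemma dist_sum {N q : ℕ} (d : Fin N → ℕ) (hd : ∀ i, d i < q) (h : ℕ → ℝ) :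
    ∑ i, h (d i) = ∑ v ∈ Finset.range q, ((univ.filter (fun i => d i = v)).card : ℝ) * h v := by
  have h1 : ∀ i : Fin N, h (d i) = ∑ v ∈ Finset.range q, if d i = v then h v else 0 := by
    intro i
    rw [Finset.sum_ite_eq (Finset.range q) (d i) h, if_pos (Finset.mem_range.2 (hd i))]
  rw [Finset.sum_congr rfl (fun i _ => h1 i), Finset.sum_comm]
  refine Finset.sum_congr rfl (fun v _ => ?_)
  rw [Finset.sum_ite, Finset.sum_const, Finset.sum_const, smul_zero, add_zero,
    nsmul_eq_mul]

lemma pair_count {N N' q : ℕ} (d : Fin N → ℕ) (e : Fin N' → ℕ)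
    (hd : ∀ i, d i < q) :
    ∑ i, ∑ j, (if d i = e j then (1:ℝ) else 0)
      = ∑ v ∈ Finset.range q,
          ((univ.filter (fun i => d i = v)).card : ℝ) *
          ((univ.filter (fun j => e j = v)).card : ℝ) := by
  have h1 : ∀ i : Fin N, (∑ j, if d i = e j then (1:ℝ) else 0)
      = ((univ.filter (fun j => e j = d i)).card : ℝ) := by
    intro i
    rw [Finset.sum_ite, Finset.sum_const, Finset.sum_const, smul_zero, add_zero,
      nsmul_eq_mul, mul_one]
    congr 1
    exact Finset.card_nbij id (fun a ha => by simpa [eq_comm] using ha)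
      (fun a ha b hb hab => hab) (fun a ha => ⟨a, by simpa [eq_comm] using ha, rfl⟩)
  rw [Finset.sum_congr rfl (fun i _ => h1 i),
    dist_sum d hd (fun v => ((univ.filter (fun j => e j = v)).card : ℝ))]

lemma bern (F w : ℕ) :
    ((6:ℝ)/5) ^ w * (1 + ((F : ℝ) - w) / 5) ≤ ((6:ℝ)/5) ^ F := by
  rcases le_or_gt w F with hwF | hFw
  · obtain ⟨t, rfl⟩ := Nat.exists_eq_add_of_le hwF
    have hb : 1 + (t : ℝ) * (1/5) ≤ (1 + 1/5) ^ t :=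
      one_add_mul_le_pow (by norm_num) t
    have hp : (0:ℝ) < ((6:ℝ)/5) ^ w := by positivity
    rw [pow_add]
    have h2 : (1 + ((↑(w + t) : ℝ) - w) / 5) = 1 + (t:ℝ) * (1/5) := by
      push_cast; ring
    rw [h2]
    have h65 : ((6:ℝ)/5) ^ t = (1 + 1/5)^t := by norm_num
    rw [h65]
    exact mul_le_mul_of_nonneg_left hb (le_of_lt hp)
  · obtain ⟨t, rfl⟩ := Nat.exists_eq_add_of_lt hFw
    have hp : (0:ℝ) < ((6:ℝ)/5) ^ F := by positivity
    rw [show F + t + 1 = F + (t+1) by ring, pow_add]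
    have key : ((6:ℝ)/5) ^ (t+1) * (1 + ((F:ℝ) - (F + t + 1 : ℕ)) / 5) ≤ 1 := by
      have hcast : (1 + ((F:ℝ) - ((F:ℕ) + t + 1 : ℕ)) / 5) = 1 - ((t:ℝ)+1)/5 := by
        push_cast; ring
      rw [hcast]
      rcases le_or_gt (1 - ((t:ℝ)+1)/5) 0 with hneg | hpos
      · calc ((6:ℝ)/5) ^ (t+1) * (1 - ((t:ℝ)+1)/5) ≤ 0 :=
              mul_nonpos_of_nonneg_of_nonpos (by positivity) hneg
          _ ≤ 1 := by norm_num
      · have hb : 1 + ((t:ℕ)+1 : ℕ) * (-(1/6) : ℝ) ≤ (1 + (-(1/6):ℝ)) ^ ((t:ℕ)+1) :=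
          one_add_mul_le_pow (by norm_num) (t+1)
        have h56 : (1 + (-(1/6):ℝ)) = 5/6 := by norm_num
        rw [h56] at hb
        have hb' : 1 - ((t:ℝ)+1)/5 ≤ ((5:ℝ)/6) ^ (t+1) := by
          calc 1 - ((t:ℝ)+1)/5 ≤ 1 - ((t:ℝ)+1)/6 := by
                have h0 : (0:ℝ) ≤ (t:ℝ)+1 := by positivity
                nlinarith
            _ ≤ ((5:ℝ)/6) ^ (t+1) := by
                push_cast at hb ⊢; linarith
        calc ((6:ℝ)/5) ^ (t+1) * (1 - ((t:ℝ)+1)/5)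
            ≤ ((6:ℝ)/5) ^ (t+1) * ((5:ℝ)/6) ^ (t+1) :=
              mul_le_mul_of_nonneg_left hb' (by positivity)
          _ = 1 := by rw [← mul_pow]; norm_num
    calc ((6:ℝ)/5) ^ F * ((6:ℝ)/5) ^ (t+1) * (1 + ((F:ℝ) - ((F:ℕ) + t + 1 : ℕ)) / 5)
        = ((6:ℝ)/5) ^ F * (((6:ℝ)/5) ^ (t+1) * (1 + ((F:ℝ) - ((F:ℕ) + t + 1:ℕ)) / 5)) := by
          ring
      _ ≤ ((6:ℝ)/5) ^ F * 1 := mul_le_mul_of_nonneg_left key (le_of_lt hp)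
      _ = ((6:ℝ)/5) ^ F := mul_one _

lemma exp_tangent (x c : ℝ) : Real.exp c * (x - c + 1) ≤ Real.exp x := by
  have h := Real.add_one_le_exp (x - c)
  calc Real.exp c * (x - c + 1) ≤ Real.exp c * Real.exp (x - c) :=
        mul_le_mul_of_nonneg_left h (le_of_lt (Real.exp_pos c))
    _ = Real.exp x := by rw [← Real.exp_add]; ring_nf

lemma exp_aa : Real.exp aa = 6/5 := by
  rw [aa, Real.exp_log]; norm_num

lemma exp_bb : Real.exp bb = 27/23 := by
  rw [bb, Real.exp_log]; norm_num

lemma prod_two {m : ℕ} (x y : Fin m → ℕ) (hx : ∀ k, x k < 2) (hy : ∀ k, y k < 2) :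
    (∏ k, ker 2 (x k) (y k))
      = ((5:ℝ)/4)^m * Real.exp (aa * ∑ k, (if x k = y k then (1:ℝ) else 0)) := by
  have hfac : ∀ k, ker 2 (x k) (y k)
      = ((5:ℝ)/4) * Real.exp (aa * (if x k = y k then (1:ℝ) else 0)) := by
    intro k; rw [ker2 (hx k) (hy k)]
    by_cases h : x k = y k
    · rw [if_pos h, if_pos h, mul_one, exp_aa]; norm_num
    · rw [if_neg h, if_neg h, mul_zero, Real.exp_zero, mul_one]
  rw [Finset.prod_congr rfl (fun k _ => hfac k), Finset.prod_mul_distrib,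
    Finset.prod_const, ← Real.exp_sum, Finset.card_univ, Fintype.card_fin, ← Finset.mul_sum]

lemma prod_three {m : ℕ} (x y : Fin m → ℕ) (hx : ∀ k, x k < 3) (hy : ∀ k, y k < 3) :
    (∏ k, ker 3 (x k) (y k))
      = ((23:ℝ)/18)^m * Real.exp (bb * ∑ k, (if x k = y k then (1:ℝ) else 0)) := by
  have hfac : ∀ k, ker 3 (x k) (y k)
      = ((23:ℝ)/18) * Real.exp (bb * (if x k = y k then (1:ℝ) else 0)) := by
    intro k; rw [ker3 (hx k) (hy k)]
    by_cases h : x k = y k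
    · rw [if_pos h, if_pos h, mul_one, exp_bb]; norm_num
    · rw [if_neg h, if_neg h, mul_zero, Real.exp_zero, mul_one]
  rw [Finset.prod_congr rfl (fun k _ => hfac k), Finset.prod_mul_distrib,
    Finset.prod_const, ← Real.exp_sum, Finset.card_univ, Fintype.card_fin, ← Finset.mul_sum]

set_option maxHeartbeats 1000000 in
lemma final_alg (n n1 m1 r : ℕ) (wd0 : ℝ) (hNR : (0:ℝ) < (n:ℝ) + n1) :
    -((4:ℝ)/3)^(m1+0+r+1) + (1/((n+n1 : ℕ):ℝ)^2) *
      (((3:ℝ)/2)^(r+1) * ((n:ℝ)^2 * (wd0 + ((4:ℝ)/3)^(m1+0)))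
        + 2 * ((((5:ℝ)/4)^(m1+1) * ((23:ℝ)/18)^r) *
            (p1c n n1 m1 * ((6:ℝ)/5) ^ w1 m1 + q1c n n1 m1 * ((6:ℝ)/5) ^ (w1 m1 + 1)))
        + (((3:ℝ)/2) * ((5:ℝ)/4)^m1 * ((23:ℝ)/18)^r) *
            ((n1:ℝ) * Real.exp (aa * (m1:ℝ) + bb * (r:ℝ))
              + (n1:ℝ) * ((n1:ℝ) - 1) * Real.exp (phi1p n1 m1 r)))
      = LBW3b2 n n1 m1 r wd0 := by
  have hcast : ((n + n1 : ℕ) : ℝ) = (n:ℝ) + n1 := by push_cast; ring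
  have hNne : ((n:ℝ) + n1) ≠ 0 := ne_of_gt hNR
  have hF : ((5:ℝ)/4)^m1 ≠ 0 := by positivity
  have hG : ((23:ℝ)/18)^r ≠ 0 := by positivity
  have hexp1 : Real.exp (aa * (m1:ℝ) + bb * (r:ℝ)) = ((6:ℝ)/5)^m1 * ((27:ℝ)/23)^r := by
    rw [Real.exp_add, mul_comm aa _, mul_comm bb _, Real.exp_nat_mul, Real.exp_nat_mul,
      exp_aa, exp_bb]
  have hcomb1 : ((5:ℝ)/4)^m1 * ((6:ℝ)/5)^m1 = ((3:ℝ)/2)^m1 := by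
    rw [← mul_pow]; norm_num
  have hcomb2 : ((23:ℝ)/18)^r * ((27:ℝ)/23)^r = ((3:ℝ)/2)^r := by
    rw [← mul_pow]; norm_num
  have h65 : ((6:ℝ)/5)^m1 = ((3:ℝ)/2)^m1 / ((5:ℝ)/4)^m1 := by
    rw [eq_div_iff hF, mul_comm]; exact hcomb1
  have h2723 : ((27:ℝ)/23)^r = ((3:ℝ)/2)^r / ((23:ℝ)/18)^r := by
    rw [eq_div_iff hG, mul_comm]; exact hcomb2
  rw [hcast, hexp1, h65, h2723, LBW3b2, Cconst, T1pc]
  rw [show m1+0+r+1 = m1+(r+1) from rfl, show m1+0 = m1 from rfl,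
    pow_add ((4:ℝ)/3) m1 (r+1), pow_add ((3:ℝ)/2) m1 (r+1), pow_succ ((3:ℝ)/2) r, pow_succ ((5:ℝ)/4) m1]
  set E1 := p1c n n1 m1 * ((6:ℝ)/5) ^ w1 m1 + q1c n n1 m1 * ((6:ℝ)/5) ^ (w1 m1 + 1) with hE1
  set X := Real.exp (phi1p n1 m1 r) with hX
  set A := ((4:ℝ)/3)^m1 with hA
  set B := ((4:ℝ)/3)^(r+1) with hB
  set C := ((3:ℝ)/2)^m1 with hC
  set Dq := ((3:ℝ)/2)^r with hDq
  set F := ((5:ℝ)/4)^m1 with hFv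
  set G := ((23:ℝ)/18)^r with hGv
  clear_value E1 X A B C Dq F G
  field_simp
  ring

set_option maxHeartbeats 1000000 in
theorem paper_stmt_4 (n n1 m1 m2 r : ℕ) (hn : 1 ≤ n) (hn1 : 2 ≤ n1)
    (hm : 1 ≤ m1) (hm2 : m2 = 0)
    (d0 : Fin n → Fin (m1 + m2) → ℕ) (d1 : Fin n1 → Fin (m1 + m2) → ℕ)
    (d2 : Fin n1 → Fin r → ℕ)
    (hd0 : IsUType n m1 m2 d0) (hd1 : IsUType n1 m1 m2 d1) (hd2 : IsBalanced n1 r d2) :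
    WD (fun k : Fin (m1 + m2 + r + 1) => qfun m1 m2 r (k : ℕ)) (appendOne n n1 (m1 + m2 + r) (augDesign n n1 (m1 + m2) r d0 d1 d2)) ≥ LBW3b2 n n1 m1 r (WD (fun k : Fin (m1 + m2) => qfun m1 m2 0 (k : ℕ)) d0) := by
  subst hm2
  -- positivity facts
  have hnR : (1:ℝ) ≤ (n:ℝ) := by exact_mod_cast hn
  have hn1R : (2:ℝ) ≤ (n1:ℝ) := by exact_mod_cast hn1
  have hNR : (0:ℝ) < (n:ℝ) + n1 := by linarith
  -- the full design
  set Df : Fin (n + n1) → Fin (m1 + 0 + r + 1) → ℕ :=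
    appendOne n n1 (m1 + 0 + r) (augDesign n n1 (m1 + 0) r d0 d1 d2) with hDf
  -- balance facts
  have h0 : ∀ k : Fin (m1+0), (∀ i, d0 i k < 2) ∧
      ∀ v < 2, 2 * (univ.filter (fun i => d0 i k = v)).card = n := by
    intro k
    have h := hd0 k
    rwa [if_pos (by omega : (k:ℕ) < m1)] at h
  have h1 : ∀ k : Fin (m1+0), (∀ i, d1 i k < 2) ∧
      ∀ v < 2, 2 * (univ.filter (fun i => d1 i k = v)).card = n1 := by
    intro k
    have h := hd1 k
    rwa [if_pos (by omega : (k:ℕ) < m1)] at h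
  have h0lt : ∀ i k, d0 i k < 2 := fun i k => (h0 k).1 i
  have h1lt : ∀ i k, d1 i k < 2 := fun i k => (h1 k).1 i
  have h2mem : ∀ i k, d2 i k = 1 ∨ d2 i k = 2 := hd2.1
  have h2lt : ∀ i k, d2 i k < 3 := by
    intro i k; rcases h2mem i k with h | h <;> omega
  have h0card : ∀ (k : Fin (m1+0)) v, v < 2 →
      (((univ.filter (fun i => d0 i k = v)).card : ℝ)) = (n:ℝ)/2 := by
    intro k v hv
    have h := (h0 k).2 v hv
    have h' : ((2 * (univ.filter (fun i => d0 i k = v)).card : ℕ) : ℝ) = (n:ℝ) := by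
      exact_mod_cast congrArg (Nat.cast : ℕ → ℝ) h
    push_cast at h'
    linarith
  have h1card : ∀ (k : Fin (m1+0)) v, v < 2 →
      (((univ.filter (fun i => d1 i k = v)).card : ℝ)) = (n1:ℝ)/2 := by
    intro k v hv
    have h := (h1 k).2 v hv
    have h' : ((2 * (univ.filter (fun i => d1 i k = v)).card : ℕ) : ℝ) = (n1:ℝ) := by
      exact_mod_cast congrArg (Nat.cast : ℕ → ℝ) h
    push_cast at h'
    linarith
  have h2card : ∀ (k : Fin r) v, v = 1 ∨ v = 2 →
      (((univ.filter (fun i => d2 i k = v)).card : ℝ)) = (n1:ℝ)/2 := by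
    intro k v hv
    have h : 2 * (univ.filter (fun i => d2 i k = v)).card = n1 := by
      rcases hv with rfl | rfl
      · exact (hd2.2 k).1
      · exact (hd2.2 k).2
    have h' : ((2 * (univ.filter (fun i => d2 i k = v)).card : ℕ) : ℝ) = (n1:ℝ) := by
      exact_mod_cast congrArg (Nat.cast : ℕ → ℝ) h
    push_cast at h'
    linarith
  have h2card0 : ∀ k : Fin r,
      (((univ.filter (fun i => d2 i k = 0)).card : ℝ)) = 0 := by
    intro k
    norm_num
    intro i hi
    rcases h2mem i k with h | h <;> omega
  -- column pair sums
  have crossSum : ∀ k : Fin (m1+0),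
      (∑ i : Fin n, ∑ j : Fin n1, if d0 i k = d1 j k then (1:ℝ) else 0)
        = (n:ℝ) * n1 / 2 := by
    intro k
    rw [pair_count (fun i => d0 i k) (fun j => d1 j k) (fun i => h0lt i k)]
    rw [Finset.sum_range_succ, Finset.sum_range_succ, Finset.sum_range_zero,
      h0card k 0 (by norm_num), h0card k 1 (by norm_num),
      h1card k 0 (by norm_num), h1card k 1 (by norm_num)]
    ring
  have ffSum : ∀ k : Fin (m1+0),
      (∑ i : Fin n1, ∑ j : Fin n1, if d1 i k = d1 j k then (1:ℝ) else 0)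
        = (n1:ℝ)^2 / 2 := by
    intro k
    rw [pair_count (fun i => d1 i k) (fun j => d1 j k) (fun i => h1lt i k)]
    rw [Finset.sum_range_succ, Finset.sum_range_succ, Finset.sum_range_zero,
      h1card k 0 (by norm_num), h1card k 1 (by norm_num)]
    ring
  have ttSum : ∀ k : Fin r,
      (∑ i : Fin n1, ∑ j : Fin n1, if d2 i k = d2 j k then (1:ℝ) else 0)
        = (n1:ℝ)^2 / 2 := by
    intro k
    rw [pair_count (fun i => d2 i k) (fun j => d2 j k) (fun i => h2lt i k)]
    rw [Finset.sum_range_succ, Finset.sum_range_succ, Finset.sum_range_succ,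
      Finset.sum_range_zero, h2card0 k,
      h2card k 1 (by norm_num), h2card k 2 (by norm_num)]
    ring
  -- entry lemmas
  have eA1 : ∀ (i : Fin n) (k : Fin m1),
      Df (Fin.castAdd n1 i) (Fin.castAdd (r+1) k) = d0 i ⟨(k:ℕ), by omega⟩ := by
    intro i k
    simp only [hDf, appendOne, augDesign, Fin.coe_castAdd]
    rw [dif_pos (by omega : (k:ℕ) < m1 + 0 + r),
      dif_pos (by exact i.isLt : (i:ℕ) < n),
      dif_pos (by omega : (k:ℕ) < m1 + 0)]
  have eA2 : ∀ (i : Fin n) (k : Fin (r+1)),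
      Df (Fin.castAdd n1 i) (Fin.natAdd m1 k) = 0 := by
    intro i k
    simp only [hDf, appendOne, augDesign, Fin.coe_castAdd, Fin.coe_natAdd]
    by_cases hk : m1 + (k:ℕ) < m1 + 0 + r
    · rw [dif_pos hk, dif_pos (by exact i.isLt : (i:ℕ) < n),
        dif_neg (by omega : ¬ (m1 + (k:ℕ) < m1 + 0))]
    · rw [dif_neg hk, if_pos (by exact i.isLt : (i:ℕ) < n)]
  have eB1 : ∀ (j : Fin n1) (k : Fin m1),
      Df (Fin.natAdd n j) (Fin.castAdd (r+1) k)
        = d1 j ⟨(k:ℕ), by omega⟩ := by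
    intro j k
    simp only [hDf, appendOne, augDesign, Fin.coe_castAdd, Fin.coe_natAdd]
    rw [dif_pos (by omega : (k:ℕ) < m1 + 0 + r),
      dif_neg (by omega : ¬ (n + (j:ℕ) < n)),
      dif_pos (by omega : (k:ℕ) < m1 + 0)]
    congr 1
    · exact Fin.ext (by simp)
  have eB2 : ∀ (j : Fin n1) (k : Fin r),
      Df (Fin.natAdd n j) (Fin.natAdd m1 (Fin.castSucc k))
        = d2 j k := by
    intro j k
    simp only [hDf, appendOne, augDesign, Fin.coe_castAdd, Fin.coe_natAdd,
      Fin.coe_castSucc]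
    rw [dif_pos (by omega : m1 + (k:ℕ) < m1 + 0 + r),
      dif_neg (by omega : ¬ (n + (j:ℕ) < n)),
      dif_neg (by omega : ¬ (m1 + (k:ℕ) < m1 + 0))]
    congr 1
    · exact Fin.ext (by simp)
    · exact Fin.ext (by simp [Nat.add_sub_cancel_left])
  have eB3 : ∀ (j : Fin n1),
      Df (Fin.natAdd n j) (Fin.natAdd m1 (Fin.last r)) = 1 := by
    intro j
    simp only [hDf, appendOne, augDesign, Fin.coe_natAdd, Fin.val_last]
    rw [dif_neg (by omega : ¬ (m1 + r < m1 + 0 + r)),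
      if_neg (by omega : ¬ (n + (j:ℕ) < n))]
  -- coincidence functions
  set Fr : Fin n1 → Fin n1 → ℝ :=
    fun i j => ∑ k : Fin (m1+0), if d1 i k = d1 j k then (1:ℝ) else 0 with hFr
  set Tr : Fin n1 → Fin n1 → ℝ :=
    fun i j => ∑ k : Fin r, if d2 i k = d2 j k then (1:ℝ) else 0 with hTr
  set Fc : Fin n → Fin n1 → ℕ :=
    fun i j => (univ.filter (fun k : Fin (m1+0) => d0 i k = d1 j k)).card with hFc
  -- the pointwise kernel product
  set P : Fin (n+n1) → Fin (n+n1) → ℝ :=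
    fun i j => ∏ k : Fin (m1 + 0 + r + 1), ker (qfun m1 0 r (k:ℕ)) (Df i k) (Df j k) with hP
  set Pd0 : Fin n → Fin n → ℝ :=
    fun i j => ∏ k : Fin (m1+0), ker (qfun m1 0 0 (k:ℕ)) (d0 i k) (d0 j k) with hPd0
  -- block II product
  have PII : ∀ i j : Fin n,
      P (Fin.castAdd n1 i) (Fin.castAdd n1 j) = ((3:ℝ)/2)^(r+1) * Pd0 i j := by
    intro i j
    have hsplit : P (Fin.castAdd n1 i) (Fin.castAdd n1 j)
        = (∏ k : Fin m1, ker (qfun m1 0 r ((Fin.castAdd (r+1) k : Fin (m1+(r+1))):ℕ))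
            (Df (Fin.castAdd n1 i) (Fin.castAdd (r+1) k))
            (Df (Fin.castAdd n1 j) (Fin.castAdd (r+1) k)))
        * ∏ k : Fin (r+1), ker (qfun m1 0 r ((Fin.natAdd m1 k : Fin (m1+(r+1))):ℕ))
            (Df (Fin.castAdd n1 i) (Fin.natAdd m1 k))
            (Df (Fin.castAdd n1 j) (Fin.natAdd m1 k)) :=
      Fin.prod_univ_add (a := m1) (b := r+1)
        (fun k => ker (qfun m1 0 r ((k : Fin (m1+(r+1))):ℕ))
          (Df (Fin.castAdd n1 i) k) (Df (Fin.castAdd n1 j) k))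
    rw [hsplit]
    have hfacT : ∀ k : Fin (r+1),
        ker (qfun m1 0 r ((Fin.natAdd m1 k : Fin (m1+(r+1))):ℕ))
          (Df (Fin.castAdd n1 i) (Fin.natAdd m1 k))
          (Df (Fin.castAdd n1 j) (Fin.natAdd m1 k)) = (3:ℝ)/2 := by
      intro k
      rw [eA2 i k, eA2 j k, ker_self]
    rw [Finset.prod_congr rfl (fun k _ => hfacT k), Finset.prod_const,
      Finset.card_univ, Fintype.card_fin]
    have hfacH : ∀ k : Fin m1,
        ker (qfun m1 0 r ((Fin.castAdd (r+1) k : Fin (m1+(r+1))):ℕ))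
          (Df (Fin.castAdd n1 i) (Fin.castAdd (r+1) k))
          (Df (Fin.castAdd n1 j) (Fin.castAdd (r+1) k))
        = ker (qfun m1 0 0 (k:ℕ)) (d0 i ⟨(k:ℕ), by omega⟩) (d0 j ⟨(k:ℕ), by omega⟩) := by
      intro k
      rw [eA1 i k, eA1 j k]
      simp only [Fin.coe_castAdd]
      rw [show qfun m1 0 r (k:ℕ) = 2 from if_pos k.isLt,
        show qfun m1 0 0 (k:ℕ) = 2 from if_pos k.isLt]
    rw [Finset.prod_congr rfl (fun k _ => hfacH k)]
    have hPd : (∏ k : Fin m1,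
        ker (qfun m1 0 0 (k:ℕ)) (d0 i ⟨(k:ℕ), by omega⟩) (d0 j ⟨(k:ℕ), by omega⟩))
        = Pd0 i j := rfl
    rw [hPd]; ring
  -- block FF product
  have PFF : ∀ i j : Fin n1,
      P (Fin.natAdd n i) (Fin.natAdd n j)
        = ((3:ℝ)/2) * ((5:ℝ)/4)^m1 * ((23:ℝ)/18)^r
            * Real.exp (aa * Fr i j + bb * Tr i j) := by
    intro i j
    have hsplit : P (Fin.natAdd n i) (Fin.natAdd n j)
        = (∏ k : Fin m1, ker (qfun m1 0 r ((Fin.castAdd (r+1) k : Fin (m1+(r+1))):ℕ))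
            (Df (Fin.natAdd n i) (Fin.castAdd (r+1) k))
            (Df (Fin.natAdd n j) (Fin.castAdd (r+1) k)))
        * ∏ k : Fin (r+1), ker (qfun m1 0 r ((Fin.natAdd m1 k : Fin (m1+(r+1))):ℕ))
            (Df (Fin.natAdd n i) (Fin.natAdd m1 k))
            (Df (Fin.natAdd n j) (Fin.natAdd m1 k)) :=
      Fin.prod_univ_add (a := m1) (b := r+1)
        (fun k => ker (qfun m1 0 r ((k : Fin (m1+(r+1))):ℕ))
          (Df (Fin.natAdd n i) k) (Df (Fin.natAdd n j) k))
    rw [hsplit]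
    -- head
    have hfacH : ∀ k : Fin m1,
        ker (qfun m1 0 r ((Fin.castAdd (r+1) k : Fin (m1+(r+1))):ℕ))
          (Df (Fin.natAdd n i) (Fin.castAdd (r+1) k))
          (Df (Fin.natAdd n j) (Fin.castAdd (r+1) k))
        = ker 2 (d1 i ⟨(k:ℕ), by omega⟩) (d1 j ⟨(k:ℕ), by omega⟩) := by
      intro k
      rw [eB1 i k, eB1 j k]
      simp only [Fin.coe_castAdd]
      rw [show qfun m1 0 r (k:ℕ) = 2 from if_pos k.isLt]
    rw [Finset.prod_congr rfl (fun k _ => hfacH k),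
      prod_two (fun k : Fin m1 => d1 i ⟨(k:ℕ), by omega⟩)
        (fun k : Fin m1 => d1 j ⟨(k:ℕ), by omega⟩)
        (fun k => h1lt i _) (fun k => h1lt j _)]
    have hFrEq : (∑ k : Fin m1,
        if d1 i ⟨(k:ℕ), by omega⟩ = d1 j ⟨(k:ℕ), by omega⟩ then (1:ℝ) else 0)
        = Fr i j := rfl
    rw [hFrEq]
    -- tail : split off the last column
    have hsplit2 : (∏ k : Fin (r+1), ker (qfun m1 0 r ((Fin.natAdd m1 k : Fin (m1+(r+1))):ℕ))
            (Df (Fin.natAdd n i) (Fin.natAdd m1 k))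
            (Df (Fin.natAdd n j) (Fin.natAdd m1 k)))
        = (∏ k : Fin r, ker (qfun m1 0 r ((Fin.natAdd m1 (Fin.castSucc k) : Fin (m1+(r+1))):ℕ))
            (Df (Fin.natAdd n i) (Fin.natAdd m1 (Fin.castSucc k)))
            (Df (Fin.natAdd n j) (Fin.natAdd m1 (Fin.castSucc k))))
          * ker (qfun m1 0 r ((Fin.natAdd m1 (Fin.last r) : Fin (m1+(r+1))):ℕ))
            (Df (Fin.natAdd n i) (Fin.natAdd m1 (Fin.last r)))
            (Df (Fin.natAdd n j) (Fin.natAdd m1 (Fin.last r))) :=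
      Fin.prod_univ_castSucc _
    rw [hsplit2]
    have hlast : ker (qfun m1 0 r ((Fin.natAdd m1 (Fin.last r) : Fin (m1+(r+1))):ℕ))
            (Df (Fin.natAdd n i) (Fin.natAdd m1 (Fin.last r)))
            (Df (Fin.natAdd n j) (Fin.natAdd m1 (Fin.last r))) = (3:ℝ)/2 := by
      rw [eB3 i, eB3 j, ker_self]
    rw [hlast]
    have hfacM : ∀ k : Fin r,
        ker (qfun m1 0 r ((Fin.natAdd m1 (Fin.castSucc k) : Fin (m1+(r+1))):ℕ))
          (Df (Fin.natAdd n i) (Fin.natAdd m1 (Fin.castSucc k)))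
          (Df (Fin.natAdd n j) (Fin.natAdd m1 (Fin.castSucc k)))
        = ker 3 (d2 i k) (d2 j k) := by
      intro k
      rw [eB2 i k, eB2 j k]
      have hq : qfun m1 0 r ((Fin.natAdd m1 (Fin.castSucc k) : Fin (m1+(r+1))):ℕ) = 3 := by
        simp only [Fin.coe_natAdd, Fin.coe_castSucc, qfun]
        rw [if_neg (by omega), if_pos (by omega)]
      rw [hq]
    rw [Finset.prod_congr rfl (fun k _ => hfacM k),
      prod_three (fun k => d2 i k) (fun k => d2 j k) (fun k => h2lt i k) (fun k => h2lt j k)]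
    have hTrEq : (∑ k : Fin r, if d2 i k = d2 j k then (1:ℝ) else 0) = Tr i j := rfl
    rw [hTrEq, Real.exp_add]
    ring
  -- block cross product
  have PIF : ∀ (i : Fin n) (j : Fin n1),
      P (Fin.castAdd n1 i) (Fin.natAdd n j)
        = ((5:ℝ)/4)^(m1+1) * ((23:ℝ)/18)^r * ((6:ℝ)/5)^(Fc i j) := by
    intro i j
    have hsplit : P (Fin.castAdd n1 i) (Fin.natAdd n j)
        = (∏ k : Fin m1, ker (qfun m1 0 r ((Fin.castAdd (r+1) k : Fin (m1+(r+1))):ℕ))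
            (Df (Fin.castAdd n1 i) (Fin.castAdd (r+1) k))
            (Df (Fin.natAdd n j) (Fin.castAdd (r+1) k)))
        * ∏ k : Fin (r+1), ker (qfun m1 0 r ((Fin.natAdd m1 k : Fin (m1+(r+1))):ℕ))
            (Df (Fin.castAdd n1 i) (Fin.natAdd m1 k))
            (Df (Fin.natAdd n j) (Fin.natAdd m1 k)) :=
      Fin.prod_univ_add (a := m1) (b := r+1)
        (fun k => ker (qfun m1 0 r ((k : Fin (m1+(r+1))):ℕ))
          (Df (Fin.castAdd n1 i) k) (Df (Fin.natAdd n j) k))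
    rw [hsplit]
    -- head
    have hfacH : ∀ k : Fin m1,
        ker (qfun m1 0 r ((Fin.castAdd (r+1) k : Fin (m1+(r+1))):ℕ))
          (Df (Fin.castAdd n1 i) (Fin.castAdd (r+1) k))
          (Df (Fin.natAdd n j) (Fin.castAdd (r+1) k))
        = ker 2 (d0 i ⟨(k:ℕ), by omega⟩) (d1 j ⟨(k:ℕ), by omega⟩) := by
      intro k
      rw [eA1 i k, eB1 j k]
      simp only [Fin.coe_castAdd]
      rw [show qfun m1 0 r (k:ℕ) = 2 from if_pos k.isLt]
    rw [Finset.prod_congr rfl (fun k _ => hfacH k),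
      prod_two (fun k : Fin m1 => d0 i ⟨(k:ℕ), by omega⟩)
        (fun k : Fin m1 => d1 j ⟨(k:ℕ), by omega⟩)
        (fun k => h0lt i _) (fun k => h1lt j _)]
    have hFcEq : (∑ k : Fin m1,
        if d0 i ⟨(k:ℕ), by omega⟩ = d1 j ⟨(k:ℕ), by omega⟩ then (1:ℝ) else 0)
        = ((Fc i j : ℕ) : ℝ) := by
      have hcard : (Fc i j : ℕ)
          = ∑ k : Fin (m1+0), if d0 i k = d1 j k then 1 else 0 :=
        Finset.card_filter _ _
      rw [hcard]
      push_cast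
      rfl
    rw [hFcEq]
    have hexp : Real.exp (aa * ((Fc i j : ℕ) : ℝ)) = ((6:ℝ)/5) ^ (Fc i j) := by
      rw [mul_comm, Real.exp_nat_mul, exp_aa]
    rw [hexp]
    -- tail : split off the last column
    have hsplit2 : (∏ k : Fin (r+1), ker (qfun m1 0 r ((Fin.natAdd m1 k : Fin (m1+(r+1))):ℕ))
            (Df (Fin.castAdd n1 i) (Fin.natAdd m1 k))
            (Df (Fin.natAdd n j) (Fin.natAdd m1 k)))
        = (∏ k : Fin r, ker (qfun m1 0 r ((Fin.natAdd m1 (Fin.castSucc k) : Fin (m1+(r+1))):ℕ))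
            (Df (Fin.castAdd n1 i) (Fin.natAdd m1 (Fin.castSucc k)))
            (Df (Fin.natAdd n j) (Fin.natAdd m1 (Fin.castSucc k))))
          * ker (qfun m1 0 r ((Fin.natAdd m1 (Fin.last r) : Fin (m1+(r+1))):ℕ))
            (Df (Fin.castAdd n1 i) (Fin.natAdd m1 (Fin.last r)))
            (Df (Fin.natAdd n j) (Fin.natAdd m1 (Fin.last r))) :=
      Fin.prod_univ_castSucc _
    rw [hsplit2]
    have hlast : ker (qfun m1 0 r ((Fin.natAdd m1 (Fin.last r) : Fin (m1+(r+1))):ℕ))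
            (Df (Fin.castAdd n1 i) (Fin.natAdd m1 (Fin.last r)))
            (Df (Fin.natAdd n j) (Fin.natAdd m1 (Fin.last r))) = (5:ℝ)/4 := by
      rw [eA2 i (Fin.last r), eB3 j]
      have hq : qfun m1 0 r ((Fin.natAdd m1 (Fin.last r) : Fin (m1+(r+1))):ℕ) = 2 := by
        simp only [Fin.coe_natAdd, Fin.val_last, qfun]
        rw [if_neg (by omega), if_neg (by omega)]
      rw [hq, ker2 (by norm_num) (by norm_num)]
      norm_num
    rw [hlast]
    have hfacM : ∀ k : Fin r,
        ker (qfun m1 0 r ((Fin.natAdd m1 (Fin.castSucc k) : Fin (m1+(r+1))):ℕ))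
          (Df (Fin.castAdd n1 i) (Fin.natAdd m1 (Fin.castSucc k)))
          (Df (Fin.natAdd n j) (Fin.natAdd m1 (Fin.castSucc k)))
        = (23:ℝ)/18 := by
      intro k
      rw [eA2 i (Fin.castSucc k), eB2 j k]
      have hq : qfun m1 0 r ((Fin.natAdd m1 (Fin.castSucc k) : Fin (m1+(r+1))):ℕ) = 3 := by
        simp only [Fin.coe_natAdd, Fin.coe_castSucc, qfun]
        rw [if_neg (by omega), if_pos (by omega)]
      rw [hq, ker3 (by norm_num) (h2lt j k)]
      rw [if_neg (by rcases h2mem j k with h | h <;> omega)]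
    rw [Finset.prod_congr rfl (fun k _ => hfacM k), Finset.prod_const,
      Finset.card_univ, Fintype.card_fin]
    ring
  -- symmetry of P
  have Pcomm : ∀ a b, P a b = P b a := by
    intro a b
    exact Finset.prod_congr rfl (fun k _ => ker_comm _ _ _)
  -- total coincidence sums
  have swap3 : ∀ {α : Type} [Fintype α] (f : Fin n1 → Fin n1 → α → ℝ),
      (∑ i : Fin n1, ∑ j : Fin n1, ∑ k : α, f i j k)
        = ∑ k : α, ∑ i : Fin n1, ∑ j : Fin n1, f i j k := by
    intro α _ f
    calc (∑ i : Fin n1, ∑ j : Fin n1, ∑ k : α, f i j k)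
        = ∑ i : Fin n1, ∑ k : α, ∑ j : Fin n1, f i j k :=
          Finset.sum_congr rfl (fun i _ => Finset.sum_comm)
      _ = ∑ k : α, ∑ i : Fin n1, ∑ j : Fin n1, f i j k := Finset.sum_comm
  have SFr : (∑ i : Fin n1, ∑ j : Fin n1, Fr i j) = (m1:ℝ) * (n1:ℝ)^2 / 2 := by
    rw [hFr]
    rw [swap3 (fun i j k => if d1 i k = d1 j k then (1:ℝ) else 0)]
    rw [Finset.sum_congr rfl (fun k _ => ffSum k), Finset.sum_const,
      Finset.card_univ, Fintype.card_fin, nsmul_eq_mul]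
    push_cast
    ring
  have STr : (∑ i : Fin n1, ∑ j : Fin n1, Tr i j) = (r:ℝ) * (n1:ℝ)^2 / 2 := by
    rw [hTr]
    rw [swap3 (fun i j k => if d2 i k = d2 j k then (1:ℝ) else 0)]
    rw [Finset.sum_congr rfl (fun k _ => ttSum k), Finset.sum_const,
      Finset.card_univ, Fintype.card_fin, nsmul_eq_mul]
    ring
  have hFcR : ∀ (i : Fin n) (j : Fin n1),
      ((Fc i j : ℕ) : ℝ) = ∑ k : Fin (m1+0), if d0 i k = d1 j k then (1:ℝ) else 0 := by
    intro i j
    rw [show (Fc i j : ℕ) = ∑ k : Fin (m1+0), if d0 i k = d1 j k then 1 else 0 from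
      Finset.card_filter _ _]
    push_cast
    rfl
  have SFc : (∑ i : Fin n, ∑ j : Fin n1, ((Fc i j : ℕ) : ℝ)) = (m1:ℝ) * n * n1 / 2 := by
    rw [Finset.sum_congr rfl (fun i _ => Finset.sum_congr rfl (fun j _ => hFcR i j))]
    calc (∑ i : Fin n, ∑ j : Fin n1, ∑ k : Fin (m1+0), if d0 i k = d1 j k then (1:ℝ) else 0)
        = ∑ i : Fin n, ∑ k : Fin (m1+0), ∑ j : Fin n1, if d0 i k = d1 j k then (1:ℝ) else 0 :=
          Finset.sum_congr rfl (fun i _ => Finset.sum_comm)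
      _ = ∑ k : Fin (m1+0), ∑ i : Fin n, ∑ j : Fin n1, if d0 i k = d1 j k then (1:ℝ) else 0 :=
          Finset.sum_comm
      _ = ∑ k : Fin (m1+0), (n:ℝ) * n1 / 2 := Finset.sum_congr rfl (fun k _ => crossSum k)
      _ = (m1:ℝ) * n * n1 / 2 := by
          rw [Finset.sum_const, Finset.card_univ, Fintype.card_fin, nsmul_eq_mul]
          push_cast
          ring
  -- diagonal values
  have Frd : ∀ i : Fin n1, Fr i i = (m1:ℝ) := by
    intro i
    rw [hFr]
    simp
  have Trd : ∀ i : Fin n1, Tr i i = (r:ℝ) := by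
    intro i
    rw [hTr]
    simp
  -- cross-block bound
  have crossB : (p1c n n1 m1 * ((6:ℝ)/5) ^ w1 m1 + q1c n n1 m1 * ((6:ℝ)/5) ^ (w1 m1 + 1))
      ≤ ∑ i : Fin n, ∑ j : Fin n1, ((6:ℝ)/5) ^ (Fc i j) := by
    set c : ℝ := ((6:ℝ)/5) ^ w1 m1 with hc
    set wR : ℝ := ((w1 m1 : ℕ) : ℝ) with hwR
    have step1 : ∀ (i : Fin n) (j : Fin n1),
        c * (1 - wR/5) + (c/5) * ((Fc i j : ℕ) : ℝ) ≤ ((6:ℝ)/5) ^ (Fc i j) := by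
      intro i j
      have hb := bern (Fc i j) (w1 m1)
      calc c * (1 - wR/5) + (c/5) * ((Fc i j : ℕ) : ℝ)
          = c * (1 + (((Fc i j : ℕ):ℝ) - wR) / 5) := by ring
        _ ≤ ((6:ℝ)/5) ^ (Fc i j) := hb
    have step2 : (∑ i : Fin n, ∑ j : Fin n1, (c * (1 - wR/5) + (c/5) * ((Fc i j : ℕ) : ℝ)))
        ≤ ∑ i : Fin n, ∑ j : Fin n1, ((6:ℝ)/5) ^ (Fc i j) :=
      Finset.sum_le_sum (fun i _ => Finset.sum_le_sum (fun j _ => step1 i j))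
    have step3 : (∑ i : Fin n, ∑ j : Fin n1, (c * (1 - wR/5) + (c/5) * ((Fc i j : ℕ) : ℝ)))
        = (n:ℝ) * n1 * (c * (1 - wR/5)) + (c/5) * ((m1:ℝ) * n * n1 / 2) := by
      have hrow : ∀ i : Fin n,
          (∑ j : Fin n1, (c * (1 - wR/5) + (c/5) * ((Fc i j : ℕ) : ℝ)))
            = (n1:ℝ) * (c * (1 - wR/5)) + (c/5) * ∑ j : Fin n1, ((Fc i j : ℕ) : ℝ) := by
        intro i
        rw [Finset.sum_add_distrib, Finset.sum_const, Finset.card_univ, Fintype.card_fin,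
          nsmul_eq_mul, ← Finset.mul_sum]
      rw [Finset.sum_congr rfl (fun i _ => hrow i), Finset.sum_add_distrib,
        Finset.sum_const, Finset.card_univ, Fintype.card_fin, nsmul_eq_mul,
        ← Finset.mul_sum, SFc]
      ring
    have step4 : p1c n n1 m1 * ((6:ℝ)/5) ^ w1 m1 + q1c n n1 m1 * ((6:ℝ)/5) ^ (w1 m1 + 1)
        = (n:ℝ) * n1 * (c * (1 - wR/5)) + (c/5) * ((m1:ℝ) * n * n1 / 2) := by
      rw [p1c, q1c, pow_succ, hc, hwR]
      ring
    rw [step4, ← step3]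
    exact step2
  -- follow-up block bound
  set c0 : ℝ := phi1p n1 m1 r with hc0
  set K : ℝ := (n1:ℝ) * ((n1:ℝ) - 1) with hK
  have hn1ne : (n1:ℝ) - 1 ≠ 0 := by linarith
  have ffB : (n1:ℝ) * Real.exp (aa * m1 + bb * r) + K * Real.exp c0
      ≤ ∑ i : Fin n1, ∑ j : Fin n1, Real.exp (aa * Fr i j + bb * Tr i j) := by
    have hdecomp : ∀ (f : Fin n1 → Fin n1 → ℝ),
        (∑ i : Fin n1, ∑ j : Fin n1, f i j)
          = (∑ i : Fin n1, f i i) + ∑ i : Fin n1, ∑ j ∈ univ.erase i, f i j := by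
      intro f
      rw [← Finset.sum_add_distrib]
      exact Finset.sum_congr rfl (fun i _ =>
        (Finset.add_sum_erase univ (f i) (Finset.mem_univ i)).symm)
    rw [hdecomp]
    have hdiag : (∑ i : Fin n1, Real.exp (aa * Fr i i + bb * Tr i i))
        = (n1:ℝ) * Real.exp (aa * m1 + bb * r) := by
      rw [Finset.sum_congr rfl (fun i _ => by rw [Frd i, Trd i]), Finset.sum_const,
        Finset.card_univ, Fintype.card_fin, nsmul_eq_mul]
    have hoffF : (∑ i : Fin n1, ∑ j ∈ univ.erase i, Fr i j)
        = (m1:ℝ) * (n1:ℝ)^2 / 2 - (n1:ℝ) * m1 := by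
      have h := hdecomp Fr
      rw [SFr] at h
      have hd : (∑ i : Fin n1, Fr i i) = (n1:ℝ) * m1 := by
        rw [Finset.sum_congr rfl (fun i _ => Frd i), Finset.sum_const,
          Finset.card_univ, Fintype.card_fin, nsmul_eq_mul]
      rw [hd] at h
      linarith
    have hoffT : (∑ i : Fin n1, ∑ j ∈ univ.erase i, Tr i j)
        = (r:ℝ) * (n1:ℝ)^2 / 2 - (n1:ℝ) * r := by
      have h := hdecomp Tr
      rw [STr] at h
      have hd : (∑ i : Fin n1, Tr i i) = (n1:ℝ) * r := by
        rw [Finset.sum_congr rfl (fun i _ => Trd i), Finset.sum_const,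
          Finset.card_univ, Fintype.card_fin, nsmul_eq_mul]
      rw [hd] at h
      linarith
    have hcount : (∑ i : Fin n1, ∑ j ∈ univ.erase i, (1:ℝ)) = K := by
      have hrow : ∀ i : Fin n1, (∑ j ∈ univ.erase i, (1:ℝ)) = (n1:ℝ) - 1 := by
        intro i
        rw [Finset.sum_const, Finset.card_erase_of_mem (Finset.mem_univ i),
          Finset.card_univ, Fintype.card_fin, nsmul_eq_mul]
        have h1n : (1:ℕ) ≤ n1 := by omega
        push_cast [Nat.cast_sub h1n]
        ring
      rw [Finset.sum_congr rfl (fun i _ => hrow i), Finset.sum_const,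
        Finset.card_univ, Fintype.card_fin, nsmul_eq_mul, hK]
    have hXsum : (∑ i : Fin n1, ∑ j ∈ univ.erase i, (aa * Fr i j + bb * Tr i j))
        = K * c0 := by
      have hexpand : (∑ i : Fin n1, ∑ j ∈ univ.erase i, (aa * Fr i j + bb * Tr i j))
          = aa * (∑ i : Fin n1, ∑ j ∈ univ.erase i, Fr i j)
            + bb * (∑ i : Fin n1, ∑ j ∈ univ.erase i, Tr i j) := by
        rw [Finset.mul_sum, Finset.mul_sum, ← Finset.sum_add_distrib]
        refine Finset.sum_congr rfl (fun i _ => ?_)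
        rw [Finset.mul_sum, Finset.mul_sum, ← Finset.sum_add_distrib]
      rw [hexpand, hoffF, hoffT, hK, hc0, phi1p]
      field_simp
    have hoffB : K * Real.exp c0
        ≤ ∑ i : Fin n1, ∑ j ∈ univ.erase i, Real.exp (aa * Fr i j + bb * Tr i j) := by
      have hpt : ∀ (i : Fin n1), ∀ j ∈ univ.erase i,
          Real.exp c0 * ((aa * Fr i j + bb * Tr i j) - c0 + 1)
            ≤ Real.exp (aa * Fr i j + bb * Tr i j) :=
        fun i j _ => exp_tangent _ _
      have hsumpt : (∑ i : Fin n1, ∑ j ∈ univ.erase i,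
          Real.exp c0 * ((aa * Fr i j + bb * Tr i j) - c0 + 1))
          ≤ ∑ i : Fin n1, ∑ j ∈ univ.erase i, Real.exp (aa * Fr i j + bb * Tr i j) :=
        Finset.sum_le_sum (fun i _ => Finset.sum_le_sum (hpt i))
      have hlin : (∑ i : Fin n1, ∑ j ∈ univ.erase i,
          Real.exp c0 * ((aa * Fr i j + bb * Tr i j) - c0 + 1)) = K * Real.exp c0 := by
        have hsplit : ∀ (x : ℝ), Real.exp c0 * (x - c0 + 1)
            = Real.exp c0 * x + (Real.exp c0 * (1 - c0)) * 1 := by intro x; ring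
        calc (∑ i : Fin n1, ∑ j ∈ univ.erase i,
              Real.exp c0 * ((aa * Fr i j + bb * Tr i j) - c0 + 1))
            = (∑ i : Fin n1, ∑ j ∈ univ.erase i,
              (Real.exp c0 * (aa * Fr i j + bb * Tr i j)
                + (Real.exp c0 * (1 - c0)) * 1)) := by
              refine Finset.sum_congr rfl (fun i _ => Finset.sum_congr rfl (fun j _ => ?_))
              rw [hsplit]
          _ = Real.exp c0 * (∑ i : Fin n1, ∑ j ∈ univ.erase i, (aa * Fr i j + bb * Tr i j))
              + (Real.exp c0 * (1 - c0)) * (∑ i : Fin n1, ∑ j ∈ univ.erase i, (1:ℝ)) := by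
              rw [Finset.mul_sum, Finset.mul_sum, ← Finset.sum_add_distrib]
              refine Finset.sum_congr rfl (fun i _ => ?_)
              rw [Finset.mul_sum, Finset.mul_sum, ← Finset.sum_add_distrib]
          _ = K * Real.exp c0 := by rw [hXsum, hcount]; ring
      rw [← hlin]
      exact hsumpt
    linarith [hdiag, hoffB]
  -- abbreviations for the final assembly
  set wd0 : ℝ := WD (fun k : Fin (m1 + 0) => qfun m1 0 0 (k : ℕ)) d0 with hwd0
  set cIF : ℝ := ((5:ℝ)/4)^(m1+1) * ((23:ℝ)/18)^r with hcIF
  set cFF : ℝ := ((3:ℝ)/2) * ((5:ℝ)/4)^m1 * ((23:ℝ)/18)^r with hcFF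
  set Ecr : ℝ := p1c n n1 m1 * ((6:ℝ)/5) ^ w1 m1 + q1c n n1 m1 * ((6:ℝ)/5) ^ (w1 m1 + 1)
    with hEcr
  set Dff : ℝ := (n1:ℝ) * Real.exp (aa * m1 + bb * r) + K * Real.exp c0 with hDff
  -- the WD of the full design
  have hWDfull : WD (fun k : Fin (m1 + 0 + r + 1) => qfun m1 0 r (k : ℕ)) Df
      = -((4:ℝ)/3)^(m1+0+r+1) + (1/((n+n1 : ℕ):ℝ)^2) * ∑ i, ∑ j, P i j := rfl
  -- the WD of the initial design
  have hWD0 : (∑ i : Fin n, ∑ j : Fin n, Pd0 i j)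
      = (n:ℝ)^2 * (wd0 + ((4:ℝ)/3)^(m1+0)) := by
    have h : wd0 = -((4:ℝ)/3)^(m1+0) + (1/(n:ℝ)^2) * ∑ i : Fin n, ∑ j : Fin n, Pd0 i j :=
      rfl
    have hne : (n:ℝ) ≠ 0 := by linarith
    rw [h]
    field_simp
    ring
  -- splitting of the double sum by row blocks
  have hsum : (∑ i : Fin (n+n1), ∑ j : Fin (n+n1), P i j)
      = (∑ i : Fin n, ∑ j : Fin n, P (Fin.castAdd n1 i) (Fin.castAdd n1 j))
      + (∑ i : Fin n, ∑ j : Fin n1, P (Fin.castAdd n1 i) (Fin.natAdd n j))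
      + (∑ i : Fin n1, ∑ j : Fin n, P (Fin.natAdd n i) (Fin.castAdd n1 j))
      + (∑ i : Fin n1, ∑ j : Fin n1, P (Fin.natAdd n i) (Fin.natAdd n j)) := by
    calc (∑ i : Fin (n+n1), ∑ j : Fin (n+n1), P i j)
        = ∑ i : Fin (n+n1),
            ((∑ j : Fin n, P i (Fin.castAdd n1 j)) + ∑ j : Fin n1, P i (Fin.natAdd n j)) :=
          Finset.sum_congr rfl (fun i _ => Fin.sum_univ_add _)
      _ = (∑ i : Fin (n+n1), ∑ j : Fin n, P i (Fin.castAdd n1 j))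
          + ∑ i : Fin (n+n1), ∑ j : Fin n1, P i (Fin.natAdd n j) := Finset.sum_add_distrib
      _ = _ := by
          rw [Fin.sum_univ_add (f := fun i => ∑ j : Fin n, P i (Fin.castAdd n1 j)),
            Fin.sum_univ_add (f := fun i => ∑ j : Fin n1, P i (Fin.natAdd n j))]
          ring
  -- block values
  have hS1 : (∑ i : Fin n, ∑ j : Fin n, P (Fin.castAdd n1 i) (Fin.castAdd n1 j))
      = ((3:ℝ)/2)^(r+1) * ((n:ℝ)^2 * (wd0 + ((4:ℝ)/3)^(m1+0))) := by
    rw [Finset.sum_congr rfl (fun i _ => Finset.sum_congr rfl (fun j _ => PII i j))]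
    rw [Finset.sum_congr rfl (fun i _ => (Finset.mul_sum _ _ _).symm),
      ← Finset.mul_sum, hWD0]
  have hS2 : (∑ i : Fin n, ∑ j : Fin n1, P (Fin.castAdd n1 i) (Fin.natAdd n j))
      = cIF * ∑ i : Fin n, ∑ j : Fin n1, ((6:ℝ)/5)^(Fc i j) := by
    rw [Finset.sum_congr rfl (fun i _ => Finset.sum_congr rfl (fun j _ => PIF i j))]
    rw [Finset.mul_sum]
    refine Finset.sum_congr rfl (fun i _ => ?_)
    rw [Finset.mul_sum]
  have hS3 : (∑ i : Fin n1, ∑ j : Fin n, P (Fin.natAdd n i) (Fin.castAdd n1 j))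
      = ∑ i : Fin n, ∑ j : Fin n1, P (Fin.castAdd n1 i) (Fin.natAdd n j) := by
    rw [Finset.sum_comm]
    exact Finset.sum_congr rfl (fun i _ => Finset.sum_congr rfl
      (fun j _ => Pcomm (Fin.natAdd n j) (Fin.castAdd n1 i)))
  have hS4 : (∑ i : Fin n1, ∑ j : Fin n1, P (Fin.natAdd n i) (Fin.natAdd n j))
      = cFF * ∑ i : Fin n1, ∑ j : Fin n1, Real.exp (aa * Fr i j + bb * Tr i j) := by
    rw [Finset.sum_congr rfl (fun i _ => Finset.sum_congr rfl (fun j _ => PFF i j))]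
    rw [Finset.mul_sum]
    refine Finset.sum_congr rfl (fun i _ => ?_)
    rw [Finset.mul_sum]
  -- the lower bound on the sum
  have hcIFpos : (0:ℝ) ≤ cIF := by rw [hcIF]; positivity
  have hcFFpos : (0:ℝ) ≤ cFF := by rw [hcFF]; positivity
  have hblock : ((3:ℝ)/2)^(r+1) * ((n:ℝ)^2 * (wd0 + ((4:ℝ)/3)^(m1+0)))
        + 2 * (cIF * Ecr) + cFF * Dff
      ≤ ∑ i : Fin (n+n1), ∑ j : Fin (n+n1), P i j := by
    rw [hsum, hS1, hS3, hS2, hS4]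
    have h2 : cIF * Ecr ≤ cIF * ∑ i : Fin n, ∑ j : Fin n1, ((6:ℝ)/5)^(Fc i j) :=
      mul_le_mul_of_nonneg_left crossB hcIFpos
    have h4 : cFF * Dff
        ≤ cFF * ∑ i : Fin n1, ∑ j : Fin n1, Real.exp (aa * Fr i j + bb * Tr i j) :=
      mul_le_mul_of_nonneg_left ffB hcFFpos
    calc ((3:ℝ)/2)^(r+1) * ((n:ℝ)^2 * (wd0 + ((4:ℝ)/3)^(m1+0)))
          + 2 * (cIF * Ecr) + cFF * Dff
        = ((3:ℝ)/2)^(r+1) * ((n:ℝ)^2 * (wd0 + ((4:ℝ)/3)^(m1+0)))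
          + (cIF * Ecr + cIF * Ecr) + cFF * Dff := by ring
      _ ≤ ((3:ℝ)/2)^(r+1) * ((n:ℝ)^2 * (wd0 + ((4:ℝ)/3)^(m1+0)))
          + ((cIF * ∑ i : Fin n, ∑ j : Fin n1, ((6:ℝ)/5)^(Fc i j))
             + cIF * ∑ i : Fin n, ∑ j : Fin n1, ((6:ℝ)/5)^(Fc i j))
          + cFF * ∑ i : Fin n1, ∑ j : Fin n1, Real.exp (aa * Fr i j + bb * Tr i j) :=
          add_le_add (add_le_add le_rfl (add_le_add h2 h2)) h4
      _ = ((3:ℝ)/2)^(r+1) * ((n:ℝ)^2 * (wd0 + ((4:ℝ)/3)^(m1+0)))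
          + cIF * (∑ i : Fin n, ∑ j : Fin n1, ((6:ℝ)/5)^(Fc i j))
          + cIF * (∑ i : Fin n, ∑ j : Fin n1, ((6:ℝ)/5)^(Fc i j))
          + cFF * ∑ i : Fin n1, ∑ j : Fin n1, Real.exp (aa * Fr i j + bb * Tr i j) := by
          ring
  have hfinal : -((4:ℝ)/3)^(m1+0+r+1)
      + (1/((n+n1 : ℕ):ℝ)^2) * (((3:ℝ)/2)^(r+1) * ((n:ℝ)^2 * (wd0 + ((4:ℝ)/3)^(m1+0)))
        + 2 * (cIF * Ecr) + cFF * Dff)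
      = LBW3b2 n n1 m1 r wd0 := by
    rw [hcIF, hcFF, hEcr, hDff, hK, hc0]
    exact final_alg n n1 m1 r wd0 hNR
  -- conclusion
  rw [ge_iff_le, ← hfinal, hWDfull]
  have hstep : (1/((n+n1 : ℕ):ℝ)^2) * (((3:ℝ)/2)^(r+1) * ((n:ℝ)^2 * (wd0 + ((4:ℝ)/3)^(m1+0)))
        + 2 * (cIF * Ecr) + cFF * Dff)
      ≤ (1/((n+n1 : ℕ):ℝ)^2) * ∑ i, ∑ j, P i j := by
    refine mul_le_mul_of_nonneg_left hblock ?_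
    positivity
  linarith [hstep]

end CAUD

end
end

section
/- Let n ≥ 1, n1 ≥ 2, m ≥ 1, r ≥ 0, let d0 ∈ U(n; 3^m), d1 ∈ U(n1; 3^m) (i.e., m1 = 0, m2 = m), let d2 be a column-balanced n1×r matrix with entries in {1,2}, let D3 be the corresponding column augmented design, and let D3b be D3 with the appended blocking column. Then WD(D3b) ≥ C(r+1) + (n²/(n+n1)²)·(3/2)^{r+1}·WD(d0) + (1/(n+n1)²)·(23/18)^{m+r}·( (3/2)·( p2·(27/23)^{w2} + q2·(27/23)^{w2+1} ) + 2·(5/4)·( p3·(27/23)^{w3} + q3·(27/23)^{w3+1} ) ). -/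
open Finset

noncomputable section

namespace CAUD

lemma bern_zpow (d : ℤ) : 1 + (d:ℝ) * (4/23) ≤ ((27:ℝ)/23) ^ d := by
  rcases le_or_gt 0 d with hd | hd
  · lift d to ℕ using hd
    rw [zpow_natCast]
    have := one_add_mul_le_pow (a := (4/23:ℝ)) (by norm_num) d
    calc 1 + (d:ℝ)*(4/23) ≤ (1+4/23:ℝ)^d := by push_cast at this ⊢; linarith
    _ = ((27:ℝ)/23)^d := by norm_num
  · obtain ⟨e, he⟩ : ∃ e : ℕ, d = -(e:ℤ) := ⟨(-d).toNat, by omega⟩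
    have h1 : ((27:ℝ)/23)^d = ((23:ℝ)/27)^e := by
      rw [show ((23:ℝ)/27) = ((27:ℝ)/23)⁻¹ by norm_num, inv_pow, ← zpow_natCast, ← zpow_neg, he]
    rw [h1, he]
    have hb := one_add_mul_le_pow (a := (-4/27:ℝ)) (by norm_num) e
    have h2 : ((1:ℝ) + -4/27)^e = (23/27:ℝ)^e := by norm_num
    rw [h2] at hb
    have hcast : ((-(e:ℤ) : ℤ):ℝ) = -(e:ℝ) := by push_cast; ring
    rw [hcast]
    have he0 : (0:ℝ) ≤ (e:ℝ) := by positivity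
    nlinarith [hb]

lemma key_ineq (w : ℤ) (x : ℕ) :
    ((27:ℝ)/23)^w + ((x:ℝ) - w) * (((27:ℝ)/23)^(w+1) - ((27:ℝ)/23)^w) ≤ ((27:ℝ)/23)^(x:ℕ) := by
  have hρ : (0:ℝ) < 27/23 := by norm_num
  have hxz : ((27:ℝ)/23)^(x:ℕ) = ((27:ℝ)/23)^((x:ℤ)) := by rw [zpow_natCast]
  rw [hxz]
  have hsplit : ((27:ℝ)/23)^((x:ℤ)) = ((27:ℝ)/23)^w * ((27:ℝ)/23)^((x:ℤ)-w) := by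
    rw [← zpow_add₀ (by norm_num : ((27:ℝ)/23) ≠ 0)]; ring_nf
  have hb := bern_zpow ((x:ℤ) - w)
  have hw1 : ((27:ℝ)/23)^(w+1) = ((27:ℝ)/23)^w * (27/23) := by
    rw [zpow_add₀ (by norm_num : ((27:ℝ)/23) ≠ 0), zpow_one]
  have hpw : (0:ℝ) < ((27:ℝ)/23)^w := zpow_pos hρ w
  rw [hsplit, hw1]
  have hcast : (((x:ℤ) - w : ℤ):ℝ) = (x:ℝ) - w := by push_cast; ring
  rw [hcast] at hb
  nlinarith [hb, hpw]

lemma convex_sum {α : Type*} (F : Finset α) (x : α → ℕ) (w : ℤ) :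
    (F.card : ℝ) * ((27:ℝ)/23)^w
      + ((∑ a ∈ F, (x a : ℝ)) - (F.card : ℝ) * w) * (((27:ℝ)/23)^(w+1) - ((27:ℝ)/23)^w)
      ≤ ∑ a ∈ F, ((27:ℝ)/23)^(x a) := by
  have h := Finset.sum_le_sum (fun a (_ : a ∈ F) => key_ineq w (x a))
  calc (F.card : ℝ) * ((27:ℝ)/23)^w
      + ((∑ a ∈ F, (x a : ℝ)) - (F.card : ℝ) * w) * (((27:ℝ)/23)^(w+1) - ((27:ℝ)/23)^w)
      = ∑ a ∈ F, (((27:ℝ)/23)^w + ((x a:ℝ) - w) * (((27:ℝ)/23)^(w+1) - ((27:ℝ)/23)^w)) := by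
        rw [Finset.sum_add_distrib, Finset.sum_const, ← Finset.sum_mul, Finset.sum_sub_distrib,
          Finset.sum_const]
        push_cast
        ring
    _ ≤ _ := h


lemma sum_ite_fiber {n n' q : ℕ} (f : Fin n → ℕ) (g : Fin n' → ℕ) (hf : ∀ i, f i < q) :
    ∑ i : Fin n, ∑ j : Fin n', (if f i = g j then (1:ℕ) else 0)
      = ∑ v ∈ Finset.range q,
          (univ.filter (fun i => f i = v)).card * (univ.filter (fun j => g j = v)).card := by
  have hinner : ∀ i : Fin n, (∑ j : Fin n', if f i = g j then (1:ℕ) else 0)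
      = (univ.filter (fun j => g j = f i)).card := by
    intro i
    rw [Finset.card_filter]
    exact Finset.sum_congr rfl (fun j _ => by simp [eq_comm])
  calc ∑ i : Fin n, ∑ j : Fin n', (if f i = g j then (1:ℕ) else 0)
      = ∑ i : Fin n, (univ.filter (fun j => g j = f i)).card :=
        Finset.sum_congr rfl (fun i _ => hinner i)
    _ = ∑ v ∈ Finset.range q, ∑ i ∈ univ.filter (fun i => f i = v),
          (univ.filter (fun j => g j = f i)).card := by
        rw [Finset.sum_fiberwise_of_maps_to (fun i _ => Finset.mem_range.mpr (hf i))]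
    _ = _ := by
        refine Finset.sum_congr rfl (fun v _ => ?_)
        rw [Finset.sum_congr rfl (fun i hi => by
          rw [(Finset.mem_filter.mp hi).2]), Finset.sum_const, smul_eq_mul]

/-- cross-count for two three-level balanced columns -/
lemma count3 {n n' : ℕ} (f : Fin n → ℕ) (g : Fin n' → ℕ) (hf : ∀ i, f i < 3)
    (hbf : ∀ v < 3, 3 * (univ.filter (fun i => f i = v)).card = n)
    (hbg : ∀ v < 3, 3 * (univ.filter (fun j => g j = v)).card = n') :
    3 * (∑ i : Fin n, ∑ j : Fin n', if f i = g j then (1:ℕ) else 0) = n * n' := by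
  rw [sum_ite_fiber f g hf]
  have h9 : 9 * ∑ v ∈ Finset.range 3,
      (univ.filter (fun i => f i = v)).card * (univ.filter (fun j => g j = v)).card
      = 3 * (n * n') := by
    rw [Finset.mul_sum]
    rw [Finset.sum_congr rfl (fun v hv => show
        9 * ((univ.filter (fun i => f i = v)).card * (univ.filter (fun j => g j = v)).card)
        = n * n' by
      have h1 := hbf v (Finset.mem_range.mp hv)
      have h2 := hbg v (Finset.mem_range.mp hv)
      calc 9 * ((univ.filter (fun i => f i = v)).card * (univ.filter (fun j => g j = v)).card)
          = (3 * (univ.filter (fun i => f i = v)).card) *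
            (3 * (univ.filter (fun j => g j = v)).card) := by ring
        _ = n * n' := by rw [h1, h2])]
    rw [Finset.sum_const]
    simp [mul_comm]
  omega

/-- count for a column with values in {1,2}, balanced -/
lemma count2 {n' : ℕ} (f g : Fin n' → ℕ) (hf : ∀ i, f i = 1 ∨ f i = 2)
    (hg : ∀ i, g i = 1 ∨ g i = 2)
    (hbf1 : 2 * (univ.filter (fun i => f i = 1)).card = n')
    (hbf2 : 2 * (univ.filter (fun i => f i = 2)).card = n')
    (hbg1 : 2 * (univ.filter (fun i => g i = 1)).card = n')
    (hbg2 : 2 * (univ.filter (fun i => g i = 2)).card = n') :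
    2 * (∑ i : Fin n', ∑ j : Fin n', if f i = g j then (1:ℕ) else 0) = n' * n' := by
  rw [sum_ite_fiber (q := 3) f g (fun i => by rcases hf i with h | h <;> omega)]
  have h0 : (univ.filter (fun i => f i = 0)).card = 0 := by
    rw [Finset.card_eq_zero, Finset.filter_eq_empty_iff]
    intro i _
    rcases hf i with h | h <;> omega
  rw [show Finset.range 3 = {0, 1, 2} by rfl]
  rw [Finset.sum_insert (by simp), Finset.sum_insert (by simp), Finset.sum_singleton, h0]
  have h4 : 4 * ((univ.filter (fun i => f i = 1)).card * (univ.filter (fun j => g j = 1)).card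
      + (univ.filter (fun i => f i = 2)).card * (univ.filter (fun j => g j = 2)).card)
      = 2 * (n' * n') := by
    calc 4 * ((univ.filter (fun i => f i = 1)).card * (univ.filter (fun j => g j = 1)).card
        + (univ.filter (fun i => f i = 2)).card * (univ.filter (fun j => g j = 2)).card)
        = (2 * (univ.filter (fun i => f i = 1)).card) * (2 * (univ.filter (fun j => g j = 1)).card)
        + (2 * (univ.filter (fun i => f i = 2)).card) * (2 * (univ.filter (fun j => g j = 2)).card) := by
          ring
      _ = 2 * (n' * n') := by rw [hbf1, hbf2, hbg1, hbg2]; ring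
  omega

lemma split_offdiag {N : Type*} [Fintype N] [DecidableEq N] {β : Type*} [AddCommMonoid β]
    (f : N → N → β) :
    ∑ i : N, ∑ j : N, f i j = (∑ i : N, f i i) + ∑ p ∈ (univ : Finset N).offDiag, f p.1 p.2 := by
  rw [← Finset.sum_product']
  rw [← Finset.sum_filter_add_sum_filter_not ((univ : Finset N) ×ˢ univ)
    (fun p : N × N => p.1 = p.2)]
  congr 1
  · rw [show ((univ : Finset N) ×ˢ univ).filter (fun p : N × N => p.1 = p.2)
        = (univ : Finset N).diag by ext p; simp]
    rw [Finset.sum_diag]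
  · congr 1; ext p; simp


section lems
variable {n n1 m2 r : ℕ} (d0 : Fin n → Fin (0+m2) → ℕ) (d1 : Fin n1 → Fin (0+m2) → ℕ)
  (d2 : Fin n1 → Fin r → ℕ)

lemma fac3 (x y : ℕ) (hx : x < 3) (hy : y < 3) :
    (3:ℝ)/2 - |uVal 3 x - uVal 3 y| * (1 - |uVal 3 x - uVal 3 y|)
      = if x = y then (3:ℝ)/2 else 23/18 := by
  rcases abs_cases (uVal 3 x - uVal 3 y) with ⟨h1, h2⟩ | ⟨h1, h2⟩ <;> rw [h1] <;>
    interval_cases x <;> interval_cases y <;> norm_num [uVal] at *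

lemma fac2 (x y : ℕ) (hx : x < 2) (hy : y < 2) :
    (3:ℝ)/2 - |uVal 2 x - uVal 2 y| * (1 - |uVal 2 x - uVal 2 y|)
      = if x = y then (3:ℝ)/2 else 5/4 := by
  rcases abs_cases (uVal 2 x - uVal 2 y) with ⟨h1, h2⟩ | ⟨h1, h2⟩ <;> rw [h1] <;>
    interval_cases x <;> interval_cases y <;> norm_num [uVal] at *

lemma prod_split {L : ℕ} (p : Fin L → Prop) [DecidablePred p] :
    (∏ k : Fin L, if p k then (3:ℝ)/2 else 23/18)
      = (23/18:ℝ)^L * (27/23:ℝ)^((univ.filter p).card) := by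
  rw [Finset.prod_ite, Finset.prod_const, Finset.prod_const]
  have hc : (univ.filter p).card + (univ.filter (fun k => ¬ p k)).card = L := by
    rw [Finset.card_filter_add_card_filter_not]; simp
  have h32 : (3:ℝ)/2 = 23/18 * (27/23) := by norm_num
  rw [h32, mul_pow,
    show (23/18:ℝ)^L = (23/18:ℝ)^((univ.filter p).card + (univ.filter (fun k => ¬ p k)).card) by
      rw [hc],
    pow_add]
  ring

def DD (d0 : Fin n → Fin (0+m2) → ℕ) (d1 : Fin n1 → Fin (0+m2) → ℕ)
    (d2 : Fin n1 → Fin r → ℕ) : Fin (n+n1) → Fin ((0+m2+r)+1) → ℕ :=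
  appendOne n n1 (0+m2+r) (augDesign n n1 (0+m2) r d0 d1 d2)

lemma DD_init_lo (i0 : Fin n) (k : Fin (0+m2)) :
    DD d0 d1 d2 (Fin.castAdd n1 i0) ((Fin.castAdd r k).castSucc) = d0 i0 k := by
  have hk : ((Fin.castAdd r k).castSucc : ℕ) = (k : ℕ) := rfl
  have h1 : ((k:ℕ) < 0+m2+r) := by have := k.isLt; omega
  simp only [DD, appendOne, augDesign, hk, dif_pos h1, dif_pos i0.isLt, dif_pos k.isLt,
    Fin.coe_castAdd, Fin.eta]

lemma DD_init_hi (i0 : Fin n) (k : Fin r) :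
    DD d0 d1 d2 (Fin.castAdd n1 i0) ((Fin.natAdd (0+m2) k).castSucc) = 0 := by
  have hk := k.isLt
  simp only [DD, appendOne, augDesign, Fin.coe_castSucc, Fin.coe_castAdd, Fin.coe_natAdd]
  rw [dif_pos (by omega), dif_pos i0.isLt, dif_neg (by omega)]

lemma DD_init_last (i0 : Fin n) :
    DD d0 d1 d2 (Fin.castAdd n1 i0) (Fin.last (0+m2+r)) = 0 := by
  simp only [DD, appendOne, Fin.val_last, Fin.coe_castAdd]
  rw [dif_neg (by omega), if_pos i0.isLt]

lemma DD_fol_lo (i1 : Fin n1) (k : Fin (0+m2)) :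
    DD d0 d1 d2 (Fin.natAdd n i1) ((Fin.castAdd r k).castSucc) = d1 i1 k := by
  have hk := k.isLt; have hi := i1.isLt
  simp only [DD, appendOne, augDesign, Fin.coe_castSucc, Fin.coe_castAdd, Fin.coe_natAdd]
  rw [dif_pos (by omega), dif_neg (by omega), dif_pos (by omega)]
  congr 1 <;> exact Fin.ext (by simp)

lemma DD_fol_hi (i1 : Fin n1) (k : Fin r) :
    DD d0 d1 d2 (Fin.natAdd n i1) ((Fin.natAdd (0+m2) k).castSucc) = d2 i1 k := by
  have hk := k.isLt; have hi := i1.isLt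
  simp only [DD, appendOne, augDesign, Fin.coe_castSucc, Fin.coe_castAdd, Fin.coe_natAdd]
  rw [dif_pos (by omega), dif_neg (by omega), dif_neg (by omega)]
  congr 1 <;> exact Fin.ext (by simp)

lemma DD_fol_last (i1 : Fin n1) :
    DD d0 d1 d2 (Fin.natAdd n i1) (Fin.last (0+m2+r)) = 1 := by
  simp only [DD, appendOne, Fin.val_last, Fin.coe_natAdd]
  rw [dif_neg (by omega), if_neg (by omega)]

lemma qcast (k : Fin (0+m2+r)) : qfun 0 m2 r ((k.castSucc : ℕ)) = 3 := by
  have := k.isLt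
  simp only [qfun, Fin.coe_castSucc]
  rw [if_neg (by omega), if_pos (by omega)]

lemma qlast : qfun 0 m2 r ((Fin.last (0+m2+r) : ℕ)) = 2 := by
  simp only [qfun, Fin.val_last]
  rw [if_neg (by omega), if_neg (by omega)]

lemma utype3 {N : ℕ} {d : Fin N → Fin (0+m2) → ℕ} (h : IsUType N 0 m2 d) (k : Fin (0+m2)) :
    (∀ i, d i k < 3) ∧ ∀ v < 3, 3 * (univ.filter (fun i => d i k = v)).card = N := by
  have := h k
  rwa [if_neg (by omega)] at this

/-- the generic factor of the WD product for the augmented design -/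
def BIG (d0 : Fin n → Fin (0+m2) → ℕ) (d1 : Fin n1 → Fin (0+m2) → ℕ)
    (d2 : Fin n1 → Fin r → ℕ) (i j : Fin (n+n1)) : ℝ :=
  ∏ k : Fin (0+m2+r+1),
    ((3:ℝ)/2 - |uVal (qfun 0 m2 r (k:ℕ)) (DD d0 d1 d2 i k) -
        uVal (qfun 0 m2 r (k:ℕ)) (DD d0 d1 d2 j k)| *
      (1 - |uVal (qfun 0 m2 r (k:ℕ)) (DD d0 d1 d2 i k) -
        uVal (qfun 0 m2 r (k:ℕ)) (DD d0 d1 d2 j k)|))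

def W0 (d0 : Fin n → Fin (0+m2) → ℕ) (i j : Fin n) : ℝ :=
  ∏ k : Fin (0+m2),
    ((3:ℝ)/2 - |uVal (qfun 0 m2 0 (k:ℕ)) (d0 i k) - uVal (qfun 0 m2 0 (k:ℕ)) (d0 j k)| *
      (1 - |uVal (qfun 0 m2 0 (k:ℕ)) (d0 i k) - uVal (qfun 0 m2 0 (k:ℕ)) (d0 j k)|))

lemma q0cast (k : Fin (0+m2)) : qfun 0 m2 0 ((k : ℕ)) = 3 := by
  have := k.isLt
  simp only [qfun]
  rw [if_neg (by omega), if_pos (by omega)]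

lemma BIG_aa (i0 j0 : Fin n) :
    BIG d0 d1 d2 (Fin.castAdd n1 i0) (Fin.castAdd n1 j0) = (3/2:ℝ)^(r+1) * W0 d0 i0 j0 := by
  rw [BIG, Fin.prod_univ_castSucc]
  rw [DD_init_last, DD_init_last, qlast, fac2 0 0 (by norm_num) (by norm_num), if_pos rfl]
  rw [Fin.prod_univ_add]
  have hlo : ∀ k : Fin (0+m2),
      ((3:ℝ)/2 - |uVal (qfun 0 m2 r (((Fin.castAdd r k).castSucc : ℕ)))
          (DD d0 d1 d2 (Fin.castAdd n1 i0) (Fin.castAdd r k).castSucc) -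
        uVal (qfun 0 m2 r (((Fin.castAdd r k).castSucc : ℕ)))
          (DD d0 d1 d2 (Fin.castAdd n1 j0) (Fin.castAdd r k).castSucc)| *
        (1 - |uVal (qfun 0 m2 r (((Fin.castAdd r k).castSucc : ℕ)))
          (DD d0 d1 d2 (Fin.castAdd n1 i0) (Fin.castAdd r k).castSucc) -
        uVal (qfun 0 m2 r (((Fin.castAdd r k).castSucc : ℕ)))
          (DD d0 d1 d2 (Fin.castAdd n1 j0) (Fin.castAdd r k).castSucc)|))
      = ((3:ℝ)/2 - |uVal (qfun 0 m2 0 (k:ℕ)) (d0 i0 k) - uVal (qfun 0 m2 0 (k:ℕ)) (d0 j0 k)| *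
        (1 - |uVal (qfun 0 m2 0 (k:ℕ)) (d0 i0 k) - uVal (qfun 0 m2 0 (k:ℕ)) (d0 j0 k)|)) := by
    intro k
    rw [DD_init_lo, DD_init_lo, qcast, q0cast]
  have hhi : ∀ k : Fin r,
      ((3:ℝ)/2 - |uVal (qfun 0 m2 r (((Fin.natAdd (0+m2) k).castSucc : ℕ)))
          (DD d0 d1 d2 (Fin.castAdd n1 i0) (Fin.natAdd (0+m2) k).castSucc) -
        uVal (qfun 0 m2 r (((Fin.natAdd (0+m2) k).castSucc : ℕ)))
          (DD d0 d1 d2 (Fin.castAdd n1 j0) (Fin.natAdd (0+m2) k).castSucc)| *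
        (1 - |uVal (qfun 0 m2 r (((Fin.natAdd (0+m2) k).castSucc : ℕ)))
          (DD d0 d1 d2 (Fin.castAdd n1 i0) (Fin.natAdd (0+m2) k).castSucc) -
        uVal (qfun 0 m2 r (((Fin.natAdd (0+m2) k).castSucc : ℕ)))
          (DD d0 d1 d2 (Fin.castAdd n1 j0) (Fin.natAdd (0+m2) k).castSucc)|))
      = (3:ℝ)/2 := by
    intro k
    rw [DD_init_hi, DD_init_hi, qcast, fac3 0 0 (by norm_num) (by norm_num), if_pos rfl]
  rw [Finset.prod_congr rfl (fun k _ => hlo k), Finset.prod_congr rfl (fun k _ => hhi k),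
    Finset.prod_const]
  rw [W0]
  simp only [Finset.card_univ, Fintype.card_fin]
  ring

lemma BIG_ab (hd0 : IsUType n 0 m2 d0) (hd1 : IsUType n1 0 m2 d1) (hd2 : IsBalanced n1 r d2)
    (i0 : Fin n) (j1 : Fin n1) :
    BIG d0 d1 d2 (Fin.castAdd n1 i0) (Fin.natAdd n j1)
      = (5/4:ℝ) * ((23/18:ℝ)^(0+m2) * (23/18:ℝ)^r) *
        (27/23:ℝ)^((univ.filter (fun k : Fin (0+m2) => d0 i0 k = d1 j1 k)).card) := by
  rw [BIG, Fin.prod_univ_castSucc]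
  rw [DD_init_last, DD_fol_last, qlast, fac2 0 1 (by norm_num) (by norm_num),
    if_neg (by norm_num)]
  rw [Fin.prod_univ_add]
  have hlo : ∀ k : Fin (0+m2),
      ((3:ℝ)/2 - |uVal (qfun 0 m2 r (((Fin.castAdd r k).castSucc : ℕ)))
          (DD d0 d1 d2 (Fin.castAdd n1 i0) (Fin.castAdd r k).castSucc) -
        uVal (qfun 0 m2 r (((Fin.castAdd r k).castSucc : ℕ)))
          (DD d0 d1 d2 (Fin.natAdd n j1) (Fin.castAdd r k).castSucc)| *
        (1 - |uVal (qfun 0 m2 r (((Fin.castAdd r k).castSucc : ℕ)))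
          (DD d0 d1 d2 (Fin.castAdd n1 i0) (Fin.castAdd r k).castSucc) -
        uVal (qfun 0 m2 r (((Fin.castAdd r k).castSucc : ℕ)))
          (DD d0 d1 d2 (Fin.natAdd n j1) (Fin.castAdd r k).castSucc)|))
      = if d0 i0 k = d1 j1 k then (3:ℝ)/2 else 23/18 := by
    intro k
    rw [DD_init_lo, DD_fol_lo, qcast,
      fac3 _ _ ((utype3 hd0 k).1 i0) ((utype3 hd1 k).1 j1)]
  have hhi : ∀ k : Fin r,
      ((3:ℝ)/2 - |uVal (qfun 0 m2 r (((Fin.natAdd (0+m2) k).castSucc : ℕ)))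
          (DD d0 d1 d2 (Fin.castAdd n1 i0) (Fin.natAdd (0+m2) k).castSucc) -
        uVal (qfun 0 m2 r (((Fin.natAdd (0+m2) k).castSucc : ℕ)))
          (DD d0 d1 d2 (Fin.natAdd n j1) (Fin.natAdd (0+m2) k).castSucc)| *
        (1 - |uVal (qfun 0 m2 r (((Fin.natAdd (0+m2) k).castSucc : ℕ)))
          (DD d0 d1 d2 (Fin.castAdd n1 i0) (Fin.natAdd (0+m2) k).castSucc) -
        uVal (qfun 0 m2 r (((Fin.natAdd (0+m2) k).castSucc : ℕ)))
          (DD d0 d1 d2 (Fin.natAdd n j1) (Fin.natAdd (0+m2) k).castSucc)|))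
      = (23:ℝ)/18 := by
    intro k
    rw [DD_init_hi, DD_fol_hi, qcast,
      fac3 0 (d2 j1 k) (by norm_num) (by rcases hd2.1 j1 k with h | h <;> omega),
      if_neg (by rcases hd2.1 j1 k with h | h <;> omega)]
  rw [Finset.prod_congr rfl (fun k _ => hlo k), Finset.prod_congr rfl (fun k _ => hhi k),
    Finset.prod_const, prod_split]
  simp only [Finset.card_univ, Fintype.card_fin]
  ring

lemma BIG_ba (hd0 : IsUType n 0 m2 d0) (hd1 : IsUType n1 0 m2 d1) (hd2 : IsBalanced n1 r d2)
    (i1 : Fin n1) (j0 : Fin n) :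
    BIG d0 d1 d2 (Fin.natAdd n i1) (Fin.castAdd n1 j0)
      = (5/4:ℝ) * ((23/18:ℝ)^(0+m2) * (23/18:ℝ)^r) *
        (27/23:ℝ)^((univ.filter (fun k : Fin (0+m2) => d1 i1 k = d0 j0 k)).card) := by
  rw [BIG, Fin.prod_univ_castSucc]
  rw [DD_init_last, DD_fol_last, qlast, fac2 1 0 (by norm_num) (by norm_num),
    if_neg (by norm_num)]
  rw [Fin.prod_univ_add]
  have hlo : ∀ k : Fin (0+m2),
      ((3:ℝ)/2 - |uVal (qfun 0 m2 r (((Fin.castAdd r k).castSucc : ℕ)))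
          (DD d0 d1 d2 (Fin.natAdd n i1) (Fin.castAdd r k).castSucc) -
        uVal (qfun 0 m2 r (((Fin.castAdd r k).castSucc : ℕ)))
          (DD d0 d1 d2 (Fin.castAdd n1 j0) (Fin.castAdd r k).castSucc)| *
        (1 - |uVal (qfun 0 m2 r (((Fin.castAdd r k).castSucc : ℕ)))
          (DD d0 d1 d2 (Fin.natAdd n i1) (Fin.castAdd r k).castSucc) -
        uVal (qfun 0 m2 r (((Fin.castAdd r k).castSucc : ℕ)))
          (DD d0 d1 d2 (Fin.castAdd n1 j0) (Fin.castAdd r k).castSucc)|))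
      = if d1 i1 k = d0 j0 k then (3:ℝ)/2 else 23/18 := by
    intro k
    rw [DD_fol_lo, DD_init_lo, qcast,
      fac3 _ _ ((utype3 hd1 k).1 i1) ((utype3 hd0 k).1 j0)]
  have hhi : ∀ k : Fin r,
      ((3:ℝ)/2 - |uVal (qfun 0 m2 r (((Fin.natAdd (0+m2) k).castSucc : ℕ)))
          (DD d0 d1 d2 (Fin.natAdd n i1) (Fin.natAdd (0+m2) k).castSucc) -
        uVal (qfun 0 m2 r (((Fin.natAdd (0+m2) k).castSucc : ℕ)))
          (DD d0 d1 d2 (Fin.castAdd n1 j0) (Fin.natAdd (0+m2) k).castSucc)| *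
        (1 - |uVal (qfun 0 m2 r (((Fin.natAdd (0+m2) k).castSucc : ℕ)))
          (DD d0 d1 d2 (Fin.natAdd n i1) (Fin.natAdd (0+m2) k).castSucc) -
        uVal (qfun 0 m2 r (((Fin.natAdd (0+m2) k).castSucc : ℕ)))
          (DD d0 d1 d2 (Fin.castAdd n1 j0) (Fin.natAdd (0+m2) k).castSucc)|))
      = (23:ℝ)/18 := by
    intro k
    rw [DD_fol_hi, DD_init_hi, qcast,
      fac3 (d2 i1 k) 0 (by rcases hd2.1 i1 k with h | h <;> omega) (by norm_num),
      if_neg (by rcases hd2.1 i1 k with h | h <;> omega)]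
  rw [Finset.prod_congr rfl (fun k _ => hlo k), Finset.prod_congr rfl (fun k _ => hhi k),
    Finset.prod_const, prod_split]
  simp only [Finset.card_univ, Fintype.card_fin]
  ring

lemma BIG_bb (hd1 : IsUType n1 0 m2 d1) (hd2 : IsBalanced n1 r d2) (i1 j1 : Fin n1) :
    BIG d0 d1 d2 (Fin.natAdd n i1) (Fin.natAdd n j1)
      = (3/2:ℝ) * ((23/18:ℝ)^(0+m2) * (23/18:ℝ)^r) *
        ((27/23:ℝ)^((univ.filter (fun k : Fin (0+m2) => d1 i1 k = d1 j1 k)).card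
          + (univ.filter (fun k : Fin r => d2 i1 k = d2 j1 k)).card) : ℝ) := by
  rw [BIG, Fin.prod_univ_castSucc]
  rw [DD_fol_last, DD_fol_last, qlast, fac2 1 1 (by norm_num) (by norm_num), if_pos rfl]
  rw [Fin.prod_univ_add]
  have hlo : ∀ k : Fin (0+m2),
      ((3:ℝ)/2 - |uVal (qfun 0 m2 r (((Fin.castAdd r k).castSucc : ℕ)))
          (DD d0 d1 d2 (Fin.natAdd n i1) (Fin.castAdd r k).castSucc) -
        uVal (qfun 0 m2 r (((Fin.castAdd r k).castSucc : ℕ)))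
          (DD d0 d1 d2 (Fin.natAdd n j1) (Fin.castAdd r k).castSucc)| *
        (1 - |uVal (qfun 0 m2 r (((Fin.castAdd r k).castSucc : ℕ)))
          (DD d0 d1 d2 (Fin.natAdd n i1) (Fin.castAdd r k).castSucc) -
        uVal (qfun 0 m2 r (((Fin.castAdd r k).castSucc : ℕ)))
          (DD d0 d1 d2 (Fin.natAdd n j1) (Fin.castAdd r k).castSucc)|))
      = if d1 i1 k = d1 j1 k then (3:ℝ)/2 else 23/18 := by
    intro k
    rw [DD_fol_lo, DD_fol_lo, qcast,
      fac3 _ _ ((utype3 hd1 k).1 i1) ((utype3 hd1 k).1 j1)]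
  have hhi : ∀ k : Fin r,
      ((3:ℝ)/2 - |uVal (qfun 0 m2 r (((Fin.natAdd (0+m2) k).castSucc : ℕ)))
          (DD d0 d1 d2 (Fin.natAdd n i1) (Fin.natAdd (0+m2) k).castSucc) -
        uVal (qfun 0 m2 r (((Fin.natAdd (0+m2) k).castSucc : ℕ)))
          (DD d0 d1 d2 (Fin.natAdd n j1) (Fin.natAdd (0+m2) k).castSucc)| *
        (1 - |uVal (qfun 0 m2 r (((Fin.natAdd (0+m2) k).castSucc : ℕ)))
          (DD d0 d1 d2 (Fin.natAdd n i1) (Fin.natAdd (0+m2) k).castSucc) -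
        uVal (qfun 0 m2 r (((Fin.natAdd (0+m2) k).castSucc : ℕ)))
          (DD d0 d1 d2 (Fin.natAdd n j1) (Fin.natAdd (0+m2) k).castSucc)|))
      = if d2 i1 k = d2 j1 k then (3:ℝ)/2 else 23/18 := by
    intro k
    rw [DD_fol_hi, DD_fol_hi, qcast,
      fac3 _ _ (by rcases hd2.1 i1 k with h | h <;> omega)
        (by rcases hd2.1 j1 k with h | h <;> omega)]
  rw [Finset.prod_congr rfl (fun k _ => hlo k), Finset.prod_congr rfl (fun k _ => hhi k),
    prod_split, prod_split, pow_add]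
  ring

end lems

set_option maxHeartbeats 4000000 in
theorem paper_stmt_5 (n n1 m1 m2 r : ℕ) (hn : 1 ≤ n) (hn1 : 2 ≤ n1)
    (hm : 1 ≤ m2) (hm1 : m1 = 0)
    (d0 : Fin n → Fin (m1 + m2) → ℕ) (d1 : Fin n1 → Fin (m1 + m2) → ℕ)
    (d2 : Fin n1 → Fin r → ℕ)
    (hd0 : IsUType n m1 m2 d0) (hd1 : IsUType n1 m1 m2 d1) (hd2 : IsBalanced n1 r d2) :
    WD (fun k : Fin (m1 + m2 + r + 1) => qfun m1 m2 r (k : ℕ)) (appendOne n n1 (m1 + m2 + r) (augDesign n n1 (m1 + m2) r d0 d1 d2)) ≥ LBW3b3 n n1 m2 r (WD (fun k : Fin (m1 + m2) => qfun m1 m2 0 (k : ℕ)) d0) := by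
  subst hm1
  classical
  -- replace design by DD
  have hDDeq : appendOne n n1 (0 + m2 + r) (augDesign n n1 (0 + m2) r d0 d1 d2)
      = DD d0 d1 d2 := rfl
  rw [ge_iff_le, hDDeq]
  -- abbreviations for the three-level sums
  set WDd0 : ℝ := WD (fun k : Fin (0 + m2) => qfun 0 m2 0 (k : ℕ)) d0 with hWDd0def
  set Sab : ℝ := ∑ i0 : Fin n, ∑ j1 : Fin n1,
      ((27:ℝ)/23) ^ ((univ.filter (fun k : Fin (0+m2) => d0 i0 k = d1 j1 k)).card) with hSabdef
  set Sba : ℝ := ∑ i1 : Fin n1, ∑ j0 : Fin n,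
      ((27:ℝ)/23) ^ ((univ.filter (fun k : Fin (0+m2) => d1 i1 k = d0 j0 k)).card) with hSbadef
  set Sbb : ℝ := ∑ p ∈ (univ : Finset (Fin n1)).offDiag,
      ((27:ℝ)/23) ^ ((univ.filter (fun k : Fin (0+m2) => d1 p.1 k = d1 p.2 k)).card
        + (univ.filter (fun k : Fin r => d2 p.1 k = d2 p.2 k)).card) with hSbbdef
  -- the WD of the augmented design as a double sum of BIG
  have hWD : WD (fun k : Fin (0+m2+r+1) => qfun 0 m2 r (k : ℕ)) (DD d0 d1 d2)
      = -((4:ℝ)/3)^(0+m2+r+1) + (1/((n+n1 : ℕ):ℝ)^2) *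
          ∑ i : Fin (n+n1), ∑ j : Fin (n+n1), BIG d0 d1 d2 i j := rfl
  rw [hWD]
  -- the WD of the initial design
  have hn0 : ((n:ℝ))^2 ≠ 0 := by positivity
  have hW0WD : WDd0 = -((4:ℝ)/3)^(0+m2) + (1/((n : ℕ):ℝ)^2) *
      ∑ i0 : Fin n, ∑ j0 : Fin n, W0 d0 i0 j0 := rfl
  have hW0sum : ∑ i0 : Fin n, ∑ j0 : Fin n, W0 d0 i0 j0
      = (n:ℝ)^2 * (WDd0 + ((4:ℝ)/3)^(0+m2)) := by
    rw [hW0WD]; field_simp; ring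
  -- diagonal of the bb block
  have hdiag : ∀ i1 : Fin n1,
      (univ.filter (fun k : Fin (0+m2) => d1 i1 k = d1 i1 k)).card
        + (univ.filter (fun k : Fin r => d2 i1 k = d2 i1 k)).card = (0+m2) + r := by
    intro i1; simp
  -- split the bb double sum into diagonal and off-diagonal
  have hbbsplit : (∑ i1 : Fin n1, ∑ j1 : Fin n1,
        ((27:ℝ)/23) ^ ((univ.filter (fun k : Fin (0+m2) => d1 i1 k = d1 j1 k)).card
          + (univ.filter (fun k : Fin r => d2 i1 k = d2 j1 k)).card))
      = (n1:ℝ) * ((27:ℝ)/23) ^ ((0+m2)+r) + Sbb := by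
    rw [split_offdiag]
    congr 1
    rw [Finset.sum_congr rfl (fun i1 _ => by rw [hdiag i1]), Finset.sum_const,
      Finset.card_univ, Fintype.card_fin, nsmul_eq_mul]
  -- the full double sum, block by block
  have hS : ∑ i : Fin (n+n1), ∑ j : Fin (n+n1), BIG d0 d1 d2 i j
      = ((3:ℝ)/2)^(r+1) * ((n:ℝ)^2 * (WDd0 + ((4:ℝ)/3)^(0+m2)))
        + (5/4:ℝ) * ((23/18:ℝ)^(0+m2) * (23/18:ℝ)^r) * (Sab + Sba)
        + (3/2:ℝ) * ((23/18:ℝ)^(0+m2) * (23/18:ℝ)^r) * Sbb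
        + (3/2:ℝ) * (n1:ℝ) * ((3/2:ℝ)^(0+m2) * (3/2:ℝ)^r) := by
    rw [Fin.sum_univ_add (f := fun i => ∑ j : Fin (n+n1), BIG d0 d1 d2 i j)]
    have hrow1 : ∀ i0 : Fin n, ∑ j : Fin (n+n1), BIG d0 d1 d2 (Fin.castAdd n1 i0) j
        = (∑ j0 : Fin n, BIG d0 d1 d2 (Fin.castAdd n1 i0) (Fin.castAdd n1 j0))
          + ∑ j1 : Fin n1, BIG d0 d1 d2 (Fin.castAdd n1 i0) (Fin.natAdd n j1) :=
      fun i0 => Fin.sum_univ_add _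
    have hrow2 : ∀ i1 : Fin n1, ∑ j : Fin (n+n1), BIG d0 d1 d2 (Fin.natAdd n i1) j
        = (∑ j0 : Fin n, BIG d0 d1 d2 (Fin.natAdd n i1) (Fin.castAdd n1 j0))
          + ∑ j1 : Fin n1, BIG d0 d1 d2 (Fin.natAdd n i1) (Fin.natAdd n j1) :=
      fun i1 => Fin.sum_univ_add _
    rw [Finset.sum_congr rfl (fun i0 _ => hrow1 i0),
      Finset.sum_congr rfl (fun i1 _ => hrow2 i1),
      Finset.sum_add_distrib, Finset.sum_add_distrib]
    have haa : ∑ i0 : Fin n, ∑ j0 : Fin n, BIG d0 d1 d2 (Fin.castAdd n1 i0) (Fin.castAdd n1 j0)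
        = ((3:ℝ)/2)^(r+1) * ((n:ℝ)^2 * (WDd0 + ((4:ℝ)/3)^(0+m2))) := by
      rw [Finset.sum_congr rfl (fun i0 _ => Finset.sum_congr rfl
        (fun j0 _ => BIG_aa d0 d1 d2 i0 j0))]
      rw [Finset.sum_congr rfl (fun i0 _ => (Finset.mul_sum univ _ _).symm),
        ← Finset.mul_sum, hW0sum]
    have hab : ∑ i0 : Fin n, ∑ j1 : Fin n1, BIG d0 d1 d2 (Fin.castAdd n1 i0) (Fin.natAdd n j1)
        = (5/4:ℝ) * ((23/18:ℝ)^(0+m2) * (23/18:ℝ)^r) * Sab := by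
      rw [Finset.sum_congr rfl (fun i0 _ => Finset.sum_congr rfl
        (fun j1 _ => BIG_ab d0 d1 d2 hd0 hd1 hd2 i0 j1))]
      rw [Finset.sum_congr rfl (fun i0 _ => (Finset.mul_sum univ _ _).symm),
        ← Finset.mul_sum, hSabdef]
    have hba : ∑ i1 : Fin n1, ∑ j0 : Fin n, BIG d0 d1 d2 (Fin.natAdd n i1) (Fin.castAdd n1 j0)
        = (5/4:ℝ) * ((23/18:ℝ)^(0+m2) * (23/18:ℝ)^r) * Sba := by
      rw [Finset.sum_congr rfl (fun i1 _ => Finset.sum_congr rfl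
        (fun j0 _ => BIG_ba d0 d1 d2 hd0 hd1 hd2 i1 j0))]
      rw [Finset.sum_congr rfl (fun i1 _ => (Finset.mul_sum univ _ _).symm),
        ← Finset.mul_sum, hSbadef]
    have hbb : ∑ i1 : Fin n1, ∑ j1 : Fin n1, BIG d0 d1 d2 (Fin.natAdd n i1) (Fin.natAdd n j1)
        = (3/2:ℝ) * ((23/18:ℝ)^(0+m2) * (23/18:ℝ)^r)
            * ((n1:ℝ) * ((27:ℝ)/23) ^ ((0+m2)+r) + Sbb) := by
      rw [Finset.sum_congr rfl (fun i1 _ => Finset.sum_congr rfl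
        (fun j1 _ => BIG_bb d0 d1 d2 hd1 hd2 i1 j1))]
      rw [Finset.sum_congr rfl (fun i1 _ => (Finset.mul_sum univ _ _).symm),
        ← Finset.mul_sum, hbbsplit]
    rw [haa, hab, hba, hbb]
    have hpow : (23/18:ℝ)^((0+m2)) * (23/18:ℝ)^r * ((27:ℝ)/23)^((0+m2)+r)
        = (3/2:ℝ)^(0+m2) * (3/2:ℝ)^r := by
      rw [pow_add,
        show (3/2:ℝ)^(0+m2) = ((23/18:ℝ) * (27/23))^(0+m2) by norm_num,
        show (3/2:ℝ)^r = ((23/18:ℝ) * (27/23))^r by norm_num, mul_pow, mul_pow]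
      ring
    linear_combination ((3:ℝ)/2) * (n1:ℝ) * hpow
  rw [hS]

  -- ### counting: cross blocks
  have hcntab : 3 * (∑ i0 : Fin n, ∑ j1 : Fin n1,
      (univ.filter (fun k : Fin (0+m2) => d0 i0 k = d1 j1 k)).card) = (0+m2) * (n * n1) := by
    have hswap : (∑ i0 : Fin n, ∑ j1 : Fin n1,
        (univ.filter (fun k : Fin (0+m2) => d0 i0 k = d1 j1 k)).card)
        = ∑ k : Fin (0+m2), ∑ i0 : Fin n, ∑ j1 : Fin n1,
            (if d0 i0 k = d1 j1 k then 1 else 0) := by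
      simp_rw [Finset.card_filter]
      rw [Finset.sum_congr rfl (fun i0 _ => Finset.sum_comm), Finset.sum_comm]
    rw [hswap, Finset.mul_sum]
    rw [Finset.sum_congr rfl (fun k _ => count3 (fun i0 => d0 i0 k) (fun j1 => d1 j1 k)
      (fun i0 => (utype3 hd0 k).1 i0) (utype3 hd0 k).2 (utype3 hd1 k).2)]
    rw [Finset.sum_const, Finset.card_univ, Fintype.card_fin, smul_eq_mul]
  have hcntba : 3 * (∑ i1 : Fin n1, ∑ j0 : Fin n,
      (univ.filter (fun k : Fin (0+m2) => d1 i1 k = d0 j0 k)).card) = (0+m2) * (n1 * n) := by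
    have hswap : (∑ i1 : Fin n1, ∑ j0 : Fin n,
        (univ.filter (fun k : Fin (0+m2) => d1 i1 k = d0 j0 k)).card)
        = ∑ k : Fin (0+m2), ∑ i1 : Fin n1, ∑ j0 : Fin n,
            (if d1 i1 k = d0 j0 k then 1 else 0) := by
      simp_rw [Finset.card_filter]
      rw [Finset.sum_congr rfl (fun i1 _ => Finset.sum_comm), Finset.sum_comm]
    rw [hswap, Finset.mul_sum]
    rw [Finset.sum_congr rfl (fun k _ => count3 (fun i1 => d1 i1 k) (fun j0 => d0 j0 k)
      (fun i1 => (utype3 hd1 k).1 i1) (utype3 hd1 k).2 (utype3 hd0 k).2)]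
    rw [Finset.sum_const, Finset.card_univ, Fintype.card_fin, smul_eq_mul]
  -- ### counting: bb block
  have hcntA : 3 * (∑ i1 : Fin n1, ∑ j1 : Fin n1,
      (univ.filter (fun k : Fin (0+m2) => d1 i1 k = d1 j1 k)).card) = (0+m2) * (n1 * n1) := by
    have hswap : (∑ i1 : Fin n1, ∑ j1 : Fin n1,
        (univ.filter (fun k : Fin (0+m2) => d1 i1 k = d1 j1 k)).card)
        = ∑ k : Fin (0+m2), ∑ i1 : Fin n1, ∑ j1 : Fin n1,
            (if d1 i1 k = d1 j1 k then 1 else 0) := by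
      simp_rw [Finset.card_filter]
      rw [Finset.sum_congr rfl (fun i1 _ => Finset.sum_comm), Finset.sum_comm]
    rw [hswap, Finset.mul_sum]
    rw [Finset.sum_congr rfl (fun k _ => count3 (fun i1 => d1 i1 k) (fun j1 => d1 j1 k)
      (fun i1 => (utype3 hd1 k).1 i1) (utype3 hd1 k).2 (utype3 hd1 k).2)]
    rw [Finset.sum_const, Finset.card_univ, Fintype.card_fin, smul_eq_mul]
  have hcntB : 2 * (∑ i1 : Fin n1, ∑ j1 : Fin n1,
      (univ.filter (fun k : Fin r => d2 i1 k = d2 j1 k)).card) = r * (n1 * n1) := by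
    have hswap : (∑ i1 : Fin n1, ∑ j1 : Fin n1,
        (univ.filter (fun k : Fin r => d2 i1 k = d2 j1 k)).card)
        = ∑ k : Fin r, ∑ i1 : Fin n1, ∑ j1 : Fin n1,
            (if d2 i1 k = d2 j1 k then 1 else 0) := by
      simp_rw [Finset.card_filter]
      rw [Finset.sum_congr rfl (fun i1 _ => Finset.sum_comm), Finset.sum_comm]
    rw [hswap, Finset.mul_sum]
    rw [Finset.sum_congr rfl (fun k _ => count2 (fun i1 => d2 i1 k) (fun j1 => d2 j1 k)
      (fun i1 => hd2.1 i1 k) (fun j1 => hd2.1 j1 k)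
      (hd2.2 k).1 (hd2.2 k).2 (hd2.2 k).1 (hd2.2 k).2)]
    rw [Finset.sum_const, Finset.card_univ, Fintype.card_fin, smul_eq_mul]
  have hcntSplit : (∑ i1 : Fin n1, ∑ j1 : Fin n1,
        (univ.filter (fun k : Fin (0+m2) => d1 i1 k = d1 j1 k)).card)
      + (∑ i1 : Fin n1, ∑ j1 : Fin n1,
        (univ.filter (fun k : Fin r => d2 i1 k = d2 j1 k)).card)
      = n1 * ((0+m2) + r) + ∑ p ∈ (univ : Finset (Fin n1)).offDiag,
          ((univ.filter (fun k : Fin (0+m2) => d1 p.1 k = d1 p.2 k)).card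
            + (univ.filter (fun k : Fin r => d2 p.1 k = d2 p.2 k)).card) := by
    rw [← Finset.sum_add_distrib]
    rw [Finset.sum_congr rfl (fun i1 _ => (Finset.sum_add_distrib).symm)]
    rw [split_offdiag (fun i1 j1 : Fin n1 =>
      (univ.filter (fun k : Fin (0+m2) => d1 i1 k = d1 j1 k)).card
        + (univ.filter (fun k : Fin r => d2 i1 k = d2 j1 k)).card)]
    congr 1
    rw [Finset.sum_congr rfl (fun i1 _ => hdiag i1), Finset.sum_const, Finset.card_univ,
      Fintype.card_fin, smul_eq_mul]
  -- ### real values of the coincidence sums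
  have hxab : (∑ p ∈ (univ : Finset (Fin n)) ×ˢ (univ : Finset (Fin n1)),
      (((univ.filter (fun k : Fin (0+m2) => d0 p.1 k = d1 p.2 k)).card : ℕ) : ℝ))
      = (m2:ℝ) * n * n1 / 3 := by
    rw [Finset.sum_product]
    have := hcntab
    have hcast : 3 * (∑ i0 : Fin n, ∑ j1 : Fin n1,
        (((univ.filter (fun k : Fin (0+m2) => d0 i0 k = d1 j1 k)).card : ℕ) : ℝ))
        = ((0:ℝ)+m2) * ((n:ℝ) * n1) := by
      exact_mod_cast this
    linarith [hcast]
  have hxba : (∑ p ∈ (univ : Finset (Fin n1)) ×ˢ (univ : Finset (Fin n)),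
      (((univ.filter (fun k : Fin (0+m2) => d1 p.1 k = d0 p.2 k)).card : ℕ) : ℝ))
      = (m2:ℝ) * n * n1 / 3 := by
    rw [Finset.sum_product]
    have hcast : 3 * (∑ i1 : Fin n1, ∑ j0 : Fin n,
        (((univ.filter (fun k : Fin (0+m2) => d1 i1 k = d0 j0 k)).card : ℕ) : ℝ))
        = ((0:ℝ)+m2) * ((n1:ℝ) * n) := by
      exact_mod_cast hcntba
    linarith [hcast]
  have hxbb : (∑ p ∈ (univ : Finset (Fin n1)).offDiag,
      ((((univ.filter (fun k : Fin (0+m2) => d1 p.1 k = d1 p.2 k)).card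
        + (univ.filter (fun k : Fin r => d2 p.1 k = d2 p.2 k)).card : ℕ)) : ℝ))
      = (m2:ℝ) * n1 * ((n1:ℝ) - 3) / 3 + (r:ℝ) * n1 * ((n1:ℝ) - 2) / 2 := by
    have hA : 3 * (∑ i1 : Fin n1, ∑ j1 : Fin n1,
        (((univ.filter (fun k : Fin (0+m2) => d1 i1 k = d1 j1 k)).card : ℕ) : ℝ))
        = ((0:ℝ)+m2) * ((n1:ℝ) * n1) := by exact_mod_cast hcntA
    have hB : 2 * (∑ i1 : Fin n1, ∑ j1 : Fin n1,
        (((univ.filter (fun k : Fin r => d2 i1 k = d2 j1 k)).card : ℕ) : ℝ))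
        = (r:ℝ) * ((n1:ℝ) * n1) := by exact_mod_cast hcntB
    have hSp : (∑ i1 : Fin n1, ∑ j1 : Fin n1,
        (((univ.filter (fun k : Fin (0+m2) => d1 i1 k = d1 j1 k)).card : ℕ) : ℝ))
        + (∑ i1 : Fin n1, ∑ j1 : Fin n1,
        (((univ.filter (fun k : Fin r => d2 i1 k = d2 j1 k)).card : ℕ) : ℝ))
        = (n1:ℝ) * (((0:ℝ)+m2) + r) + ∑ p ∈ (univ : Finset (Fin n1)).offDiag,
            ((((univ.filter (fun k : Fin (0+m2) => d1 p.1 k = d1 p.2 k)).card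
              + (univ.filter (fun k : Fin r => d2 p.1 k = d2 p.2 k)).card : ℕ)) : ℝ) := by
      exact_mod_cast hcntSplit
    linarith [hA, hB, hSp]
  -- ### convexity bounds
  have hBab : p3c n n1 m2 * ((27:ℝ)/23)^(w3 m2) + q3c n n1 m2 * ((27:ℝ)/23)^(w3 m2 + 1)
      ≤ Sab := by
    have hc := convex_sum ((univ : Finset (Fin n)) ×ˢ (univ : Finset (Fin n1)))
      (fun p => (univ.filter (fun k : Fin (0+m2) => d0 p.1 k = d1 p.2 k)).card)
      ((w3 m2 : ℕ) : ℤ)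
    rw [hxab] at hc
    have hsum1 : (∑ p ∈ (univ : Finset (Fin n)) ×ˢ (univ : Finset (Fin n1)),
        ((27:ℝ)/23)^((univ.filter (fun k : Fin (0+m2) => d0 p.1 k = d1 p.2 k)).card)) = Sab := by
      rw [Finset.sum_product, hSabdef]
    rw [hsum1] at hc
    have hcard : (((univ : Finset (Fin n)) ×ˢ (univ : Finset (Fin n1))).card : ℝ)
        = (n:ℝ) * n1 := by
      rw [Finset.card_product, Finset.card_univ, Finset.card_univ, Fintype.card_fin,
        Fintype.card_fin]
      push_cast; ring
    rw [hcard] at hc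
    have hz1 : ((27:ℝ)/23)^(((w3 m2 : ℕ) : ℤ)) = ((27:ℝ)/23)^(w3 m2) := zpow_natCast _ _
    have hz2 : ((27:ℝ)/23)^(((w3 m2 : ℕ) : ℤ)+1) = ((27:ℝ)/23)^(w3 m2 + 1) := by
      rw [show ((w3 m2 : ℕ):ℤ)+1 = ((w3 m2 + 1 : ℕ):ℤ) by push_cast; ring, zpow_natCast]
    rw [hz1, hz2] at hc
    calc p3c n n1 m2 * ((27:ℝ)/23)^(w3 m2) + q3c n n1 m2 * ((27:ℝ)/23)^(w3 m2 + 1)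
        = (n:ℝ) * n1 * ((27:ℝ)/23)^(w3 m2)
          + ((m2:ℝ) * n * n1 / 3 - (n:ℝ) * n1 * (((w3 m2 : ℕ) : ℤ) : ℝ)) *
            (((27:ℝ)/23)^(w3 m2 + 1) - ((27:ℝ)/23)^(w3 m2)) := by
          rw [p3c, q3c]; push_cast; ring
      _ ≤ Sab := hc
  have hBba : p3c n n1 m2 * ((27:ℝ)/23)^(w3 m2) + q3c n n1 m2 * ((27:ℝ)/23)^(w3 m2 + 1)
      ≤ Sba := by
    have hc := convex_sum ((univ : Finset (Fin n1)) ×ˢ (univ : Finset (Fin n)))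
      (fun p => (univ.filter (fun k : Fin (0+m2) => d1 p.1 k = d0 p.2 k)).card)
      ((w3 m2 : ℕ) : ℤ)
    rw [hxba] at hc
    have hsum1 : (∑ p ∈ (univ : Finset (Fin n1)) ×ˢ (univ : Finset (Fin n)),
        ((27:ℝ)/23)^((univ.filter (fun k : Fin (0+m2) => d1 p.1 k = d0 p.2 k)).card)) = Sba := by
      rw [Finset.sum_product, hSbadef]
    rw [hsum1] at hc
    have hcard : (((univ : Finset (Fin n1)) ×ˢ (univ : Finset (Fin n))).card : ℝ)
        = (n1:ℝ) * n := by
      rw [Finset.card_product, Finset.card_univ, Finset.card_univ, Fintype.card_fin,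
        Fintype.card_fin]
      push_cast; ring
    rw [hcard] at hc
    have hz1 : ((27:ℝ)/23)^(((w3 m2 : ℕ) : ℤ)) = ((27:ℝ)/23)^(w3 m2) := zpow_natCast _ _
    have hz2 : ((27:ℝ)/23)^(((w3 m2 : ℕ) : ℤ)+1) = ((27:ℝ)/23)^(w3 m2 + 1) := by
      rw [show ((w3 m2 : ℕ):ℤ)+1 = ((w3 m2 + 1 : ℕ):ℤ) by push_cast; ring, zpow_natCast]
    rw [hz1, hz2] at hc
    calc p3c n n1 m2 * ((27:ℝ)/23)^(w3 m2) + q3c n n1 m2 * ((27:ℝ)/23)^(w3 m2 + 1)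
        = (n1:ℝ) * n * ((27:ℝ)/23)^(w3 m2)
          + ((m2:ℝ) * n * n1 / 3 - (n1:ℝ) * n * (((w3 m2 : ℕ) : ℤ) : ℝ)) *
            (((27:ℝ)/23)^(w3 m2 + 1) - ((27:ℝ)/23)^(w3 m2)) := by
          rw [p3c, q3c]; push_cast; ring
      _ ≤ Sba := hc
  have hBbb : p2c n1 m2 r * ((27:ℝ)/23)^(w2 n1 m2 r)
      + q2c n1 m2 r * ((27:ℝ)/23)^(w2 n1 m2 r + 1) ≤ Sbb := by
    have hc := convex_sum ((univ : Finset (Fin n1)).offDiag)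
      (fun p => (univ.filter (fun k : Fin (0+m2) => d1 p.1 k = d1 p.2 k)).card
        + (univ.filter (fun k : Fin r => d2 p.1 k = d2 p.2 k)).card)
      (w2 n1 m2 r)
    rw [hxbb] at hc
    rw [← hSbbdef] at hc
    have hcard : (((univ : Finset (Fin n1)).offDiag).card : ℝ) = (n1:ℝ) * ((n1:ℝ) - 1) := by
      rw [Finset.offDiag_card, Finset.card_univ, Fintype.card_fin]
      have h1 : n1 ≤ n1 * n1 := Nat.le_mul_of_pos_left n1 (by omega)
      rw [Nat.cast_sub h1]
      push_cast; ring
    rw [hcard] at hc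
    calc p2c n1 m2 r * ((27:ℝ)/23)^(w2 n1 m2 r) + q2c n1 m2 r * ((27:ℝ)/23)^(w2 n1 m2 r + 1)
        = (n1:ℝ) * ((n1:ℝ) - 1) * ((27:ℝ)/23)^(w2 n1 m2 r)
          + (((m2:ℝ) * n1 * ((n1:ℝ) - 3) / 3 + (r:ℝ) * n1 * ((n1:ℝ) - 2) / 2)
              - (n1:ℝ) * ((n1:ℝ) - 1) * ((w2 n1 m2 r : ℤ) : ℝ)) *
            (((27:ℝ)/23)^(w2 n1 m2 r + 1) - ((27:ℝ)/23)^(w2 n1 m2 r)) := by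
          rw [p2c, q2c]; push_cast; ring
      _ ≤ Sbb := hc
  -- ### final assembly
  have hNpos : (0:ℝ) < ((n + n1 : ℕ):ℝ)^2 := by positivity
  have hkey : (-((4:ℝ)/3)^(0+m2+r+1) + (1/((n+n1 : ℕ):ℝ)^2) *
        (((3:ℝ)/2)^(r+1) * ((n:ℝ)^2 * (WDd0 + ((4:ℝ)/3)^(0+m2)))
        + (5/4:ℝ) * ((23/18:ℝ)^(0+m2) * (23/18:ℝ)^r) * (Sab + Sba)
        + (3/2:ℝ) * ((23/18:ℝ)^(0+m2) * (23/18:ℝ)^r) * Sbb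
        + (3/2:ℝ) * (n1:ℝ) * ((3/2:ℝ)^(0+m2) * (3/2:ℝ)^r)))
      - LBW3b3 n n1 m2 r WDd0
      = (1/((n+n1 : ℕ):ℝ)^2) * ((23/18:ℝ)^(0+m2) * (23/18:ℝ)^r) *
        ((3/2:ℝ) * (Sbb - (p2c n1 m2 r * ((27:ℝ)/23)^(w2 n1 m2 r)
            + q2c n1 m2 r * ((27:ℝ)/23)^(w2 n1 m2 r + 1)))
          + (5/4:ℝ) * (Sab - (p3c n n1 m2 * ((27:ℝ)/23)^(w3 m2)
            + q3c n n1 m2 * ((27:ℝ)/23)^(w3 m2 + 1)))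
          + (5/4:ℝ) * (Sba - (p3c n n1 m2 * ((27:ℝ)/23)^(w3 m2)
            + q3c n n1 m2 * ((27:ℝ)/23)^(w3 m2 + 1)))) := by
    rw [LBW3b3, Cconst]
    push_cast
    ring
  have hnn : (0:ℝ) ≤ (1/((n+n1 : ℕ):ℝ)^2) * ((23/18:ℝ)^(0+m2) * (23/18:ℝ)^r) *
        ((3/2:ℝ) * (Sbb - (p2c n1 m2 r * ((27:ℝ)/23)^(w2 n1 m2 r)
            + q2c n1 m2 r * ((27:ℝ)/23)^(w2 n1 m2 r + 1)))
          + (5/4:ℝ) * (Sab - (p3c n n1 m2 * ((27:ℝ)/23)^(w3 m2)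
            + q3c n n1 m2 * ((27:ℝ)/23)^(w3 m2 + 1)))
          + (5/4:ℝ) * (Sba - (p3c n n1 m2 * ((27:ℝ)/23)^(w3 m2)
            + q3c n n1 m2 * ((27:ℝ)/23)^(w3 m2 + 1)))) := by
    apply mul_nonneg
    · positivity
    · linarith [hBab, hBba, hBbb]
  linarith [hkey, hnn]


end CAUD

end
end
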